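/- Let G be a graph obtained from the disjoint union of a triangle xyz and a connected well-edge-dominated bipartite graph G' = (A ∪ B, E') with |A| < |B| by identifying z with a vertex w ∈ B such that G' − w is also well-edge-dominated. Then every minimal edge dominating set of G has cardinality |A| + 1; in particular G is well-edge-dominated. -/

import Mathlib

open Finset
set_option linter.unusedSectionVars false
set_option linter.unusedVariables false
set_option maxHeartbeats 1000000


/-- `F` is an edge dominating set of `G`: every edge of `G` is in `F` or shares a
vertex with an edge of `F` (edges of `F` themselves share a vertex with themselves). -/
def IsEDS {V : Type*} (G : SimpleGraph V) (F : Finset (Sym2 V)) : Prop :=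
  ↑F ⊆ G.edgeSet ∧ ∀ e ∈ G.edgeSet, ∃ f ∈ F, ∃ v : V, v ∈ e ∧ v ∈ f

/-- `F` is a minimal edge dominating set of `G`. -/
def IsMinEDS {V : Type*} (G : SimpleGraph V) (F : Finset (Sym2 V)) : Prop :=
  IsEDS G F ∧ ∀ F' ⊂ F, ¬ IsEDS G F'

/-- `G` is well-edge-dominated: all minimal edge dominating sets have the same size. -/
def WellEdgeDominated {V : Type*} (G : SimpleGraph V) : Prop :=
  ∀ F₁ F₂ : Finset (Sym2 V), IsMinEDS G F₁ → IsMinEDS G F₂ → F₁.card = F₂.card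

/-- `M` is a matching of `G`: a set of pairwise vertex-disjoint edges. -/
def IsMatchingSet {V : Type*} (G : SimpleGraph V) (M : Finset (Sym2 V)) : Prop :=
  ↑M ⊆ G.edgeSet ∧ ∀ e ∈ M, ∀ f ∈ M, e ≠ f → ∀ v : V, ¬ (v ∈ e ∧ v ∈ f)

/-- `M` is a maximal matching of `G`: a matching such that every edge of `G`
shares a vertex with an edge of `M` (so no edge can be added). -/
def IsMaximalMatching {V : Type*} (G : SimpleGraph V) (M : Finset (Sym2 V)) : Prop :=
  IsMatchingSet G M ∧ ∀ e ∈ G.edgeSet, ∃ f ∈ M, ∃ v : V, v ∈ e ∧ v ∈ f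

/-- `G` is equimatchable: all maximal matchings have the same size. -/
def Equimatchable {V : Type*} (G : SimpleGraph V) : Prop :=
  ∀ M₁ M₂ : Finset (Sym2 V), IsMaximalMatching G M₁ → IsMaximalMatching G M₂ →
    M₁.card = M₂.card


/-- The graph obtained from `G'` by adding a triangle through the vertex `w`:
two new vertices `x, y` (the two elements of `Fin 2`) joined to each other and to `w`. -/
def attachTriangle {W : Type*} (G' : SimpleGraph W) (w : W) : SimpleGraph (W ⊕ Fin 2) :=
  SimpleGraph.fromRel (fun a b =>
    match a, b with
    | Sum.inl u, Sum.inl v => G'.Adj u v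
    | Sum.inl u, Sum.inr _ => u = w
    | Sum.inr _, Sum.inl v => v = w
    | Sum.inr _, Sum.inr _ => True)

namespace AW
variable {V : Type*} [Fintype V] [DecidableEq V]

/-- `v` is saturated by the edge set `M`. -/
def satV (M : Finset (Sym2 V)) (v : V) : Prop := ∃ e ∈ M, v ∈ e

lemma edge_repr {G : SimpleGraph V} {e : Sym2 V} (he : e ∈ G.edgeSet) :
    ∃ a b, G.Adj a b ∧ e = s(a, b) := by
  induction e with
  | _ a b => exact ⟨a, b, he, rfl⟩

lemma exists_minEDS_subset (G : SimpleGraph V) :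
    ∀ F : Finset (Sym2 V), IsEDS G F → ∃ F', F' ⊆ F ∧ IsMinEDS G F' := by
  intro F
  induction F using Finset.strongInduction with
  | _ F ih =>
    intro hF
    by_cases h : ∀ F' ⊂ F, ¬ IsEDS G F'
    · exact ⟨F, subset_rfl, hF, h⟩
    · push_neg at h
      obtain ⟨F', hsub, hF'⟩ := h
      obtain ⟨F'', h1, h2⟩ := ih F' hsub hF'
      exact ⟨F'', h1.trans hsub.subset, h2⟩

lemma exists_maximalMatching_contains (G : SimpleGraph V) (M : Finset (Sym2 V))
    (hM : IsMatchingSet G M) : ∃ N, M ⊆ N ∧ IsMaximalMatching G N := by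
  classical
  let P : Finset (Finset (Sym2 V)) :=
    Finset.univ.filter (fun N => IsMatchingSet G N ∧ M ⊆ N)
  have hPne : P.Nonempty := ⟨M, by simp [P, hM]⟩
  obtain ⟨N, hN, hNmax⟩ := P.exists_max_image Finset.card hPne
  simp only [P, Finset.mem_filter, Finset.mem_univ, true_and] at hN
  refine ⟨N, hN.2, hN.1, ?_⟩
  intro e he
  by_contra hcon
  push_neg at hcon
  obtain ⟨a, b, hab, rfl⟩ := edge_repr he
  have heN : s(a, b) ∉ N := by
    intro h
    exact hcon _ h a (by simp) (by simp)
  have hmatch : IsMatchingSet G (insert s(a,b) N) := by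
    constructor
    · intro f hf
      rcases Finset.mem_insert.mp hf with rfl | hf
      · exact he
      · exact hN.1.1 hf
    · intro f hf g hg hfg v hv
      rcases Finset.mem_insert.mp hf with rfl | hf <;>
        rcases Finset.mem_insert.mp hg with rfl | hg
      · exact hfg rfl
      · exact hcon _ hg v hv.1 hv.2
      · exact hcon _ hf v hv.2 hv.1
      · exact hN.1.2 f hf g hg hfg v hv
  have hmem : insert s(a,b) N ∈ P := by
    simp only [P, Finset.mem_filter, Finset.mem_univ, true_and]
    exact ⟨hmatch, hN.2.trans (Finset.subset_insert _ _)⟩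
  have := hNmax _ hmem
  have : N.card + 1 ≤ N.card := by
    rwa [Finset.card_insert_of_notMem heN] at this
  omega

lemma maximalMatching_isMinEDS {G : SimpleGraph V} {M : Finset (Sym2 V)}
    (h : IsMaximalMatching G M) : IsMinEDS G M := by
  refine ⟨⟨h.1.1, h.2⟩, ?_⟩
  rintro F' hF' ⟨hsub, hdom⟩
  obtain ⟨e, heM, heF'⟩ := Finset.exists_of_ssubset hF'
  obtain ⟨f, hf, v, hv1, hv2⟩ := hdom e (h.1.1 heM)
  exact h.1.2 e heM f (hF'.subset hf) (fun hh => heF' (hh ▸ hf)) v ⟨hv1, hv2⟩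

lemma partner_unique {G : SimpleGraph V} {M : Finset (Sym2 V)} (hM : IsMatchingSet G M)
    {v : V} {e f : Sym2 V} (he : e ∈ M) (hf : f ∈ M) (hve : v ∈ e) (hvf : v ∈ f) : e = f := by
  by_contra h
  exact hM.2 e he f hf h v ⟨hve, hvf⟩

lemma exists_partner {G : SimpleGraph V} {M : Finset (Sym2 V)} (hM : IsMatchingSet G M)
    {v : V} (h : satV M v) : ∃ u, s(v, u) ∈ M ∧ G.Adj v u := by
  obtain ⟨e, he, hve⟩ := h
  obtain ⟨a, b, hab, rfl⟩ := edge_repr (hM.1 he)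
  rcases Sym2.mem_iff.mp hve with rfl | rfl
  · exact ⟨b, he, hab⟩
  · exact ⟨a, by rwa [Sym2.eq_swap], hab.symm⟩




section Bip
set_option linter.unusedSectionVars false
variable {G : SimpleGraph V} {A B : Finset V} (hd : Disjoint A B)
  (hbip : ∀ a b : V, G.Adj a b → (a ∈ A ∧ b ∈ B) ∨ (a ∈ B ∧ b ∈ A))

include hd hbip

/-- in a bipartite graph, every edge has exactly one endpoint in A; return it. -/
lemma edge_Aendpoint {a b : V} (hab : G.Adj a b) :
    (a ∈ A ∧ b ∉ A) ∨ (b ∈ A ∧ a ∉ A) := by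
  rcases hbip a b hab with ⟨h1, h2⟩ | ⟨h1, h2⟩
  · exact Or.inl ⟨h1, fun hh => (Finset.disjoint_left.mp hd hh h2)⟩
  · exact Or.inr ⟨h2, fun hh => (Finset.disjoint_left.mp hd hh h1)⟩

/-- A matching saturating `A` in a bipartite graph is a minimal EDS of cardinality `|A|`. -/
lemma asat_isMinEDS {M : Finset (Sym2 V)} (hM : IsMatchingSet G M)
    (hsat : ∀ a ∈ A, satV M a) : IsMinEDS G M ∧ M.card = A.card := by
  classical
  have hedge : ∀ e ∈ M, ∃ a b, a ∈ A ∧ b ∉ A ∧ G.Adj a b ∧ e = s(a,b) := by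
    intro e he
    obtain ⟨a, b, hab, rfl⟩ := edge_repr (hM.1 he)
    rcases edge_Aendpoint hd hbip hab with ⟨h1, h2⟩ | ⟨h1, h2⟩
    · exact ⟨a, b, h1, h2, hab, rfl⟩
    · exact ⟨b, a, h1, h2, hab.symm, Sym2.eq_swap⟩
  have hdom : ∀ e ∈ G.edgeSet, ∃ f ∈ M, ∃ v : V, v ∈ e ∧ v ∈ f := by
    intro e he
    obtain ⟨a, b, hab, rfl⟩ := edge_repr he
    have : ∃ a' ∈ A, a' ∈ s(a,b) := by
      rcases hbip a b hab with ⟨h1, _⟩ | ⟨_, h1⟩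
      · exact ⟨a, h1, by simp⟩
      · exact ⟨b, h1, by simp⟩
    obtain ⟨a', ha', hmem⟩ := this
    obtain ⟨f, hf, hvf⟩ := hsat a' ha'
    exact ⟨f, hf, a', hmem, hvf⟩
  constructor
  constructor
  · exact ⟨hM.1, hdom⟩
  · rintro F' hF' ⟨hsub, hdomF⟩
    obtain ⟨e, heM, heF⟩ := Finset.exists_of_ssubset hF'
    obtain ⟨f, hf, v, hv1, hv2⟩ := hdomF e (hM.1 heM)
    exact hM.2 e heM f (hF'.subset hf) (fun hh => heF (hh ▸ hf)) v ⟨hv1, hv2⟩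
  · -- cardinality
    have hchoice : ∀ e ∈ M, ∃ a, a ∈ A ∧ a ∈ e := by
      intro e he
      obtain ⟨a, b, h1, _, _, rfl⟩ := hedge e he
      exact ⟨a, h1, by simp⟩
    choose g hg1 hg2 using hchoice
    apply Finset.card_bij g hg1
    · intro e he f hf hgef
      by_contra hne
      exact hM.2 e he f hf hne _ ⟨hg2 e he, hgef ▸ hg2 f hf⟩
    · intro a ha
      obtain ⟨e, he, hae⟩ := hsat a ha
      refine ⟨e, he, ?_⟩
      have hga := hg2 e he
      have hgA := hg1 e he
      obtain ⟨a', b', h1, h2, h3, hrep⟩ := hedge e he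
      subst hrep
      · rcases Sym2.mem_iff.mp hae with rfl | rfl
        · rcases Sym2.mem_iff.mp hga with h | h
          · exact h
          · exact absurd (h ▸ hgA) h2
        · exact absurd ha h2

lemma card_le_of_sat {M : Finset (Sym2 V)} (hM : IsMatchingSet G M)
    (hsat : ∀ b ∈ B, satV M b) : B.card ≤ A.card := by
  classical
  have hchoice : ∀ b : V, ∃ a, b ∈ B → a ∈ A ∧ s(b, a) ∈ M := by
    intro b
    by_cases hb : b ∈ B
    · obtain ⟨u, hu, hadj⟩ := exists_partner hM (hsat b hb)
      rcases hbip b u hadj with ⟨h1, _⟩ | ⟨_, h2⟩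
      · exact absurd h1 (Finset.disjoint_right.mp hd hb)
      · exact ⟨u, fun _ => ⟨h2, hu⟩⟩
    · exact ⟨b, fun h => absurd h hb⟩
  choose f hf using hchoice
  apply Finset.card_le_card_of_injOn f (fun b hb => (hf b hb).1)
  intro b1 hb1 b2 hb2 hff
  simp only [Finset.mem_coe] at hb1 hb2
  have h1 := (hf b1 hb1).2
  have h2 := (hf b2 hb2).2
  rw [hff] at h1
  have := partner_unique hM h1 h2 (Sym2.mem_mk_right _ _) (Sym2.mem_mk_right _ _)
  have := Sym2.congr_left.mp this
  exact this

end Bip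


open Classical in
noncomputable def nbr (H : SimpleGraph V) (v : V) : Finset V :=
  Finset.univ.filter (fun u => H.Adj v u)

lemma mem_nbr {H : SimpleGraph V} {v u : V} : u ∈ nbr H v ↔ H.Adj v u := by
  classical
  simp [nbr]

set_option linter.unusedSectionVars false

/-- Hall's theorem: either an `A`-saturating matching, or a minimum-cardinality violator. -/
lemma exists_asat_or_violator (H : SimpleGraph V) (A B : Finset V) (hd : Disjoint A B)
    (hbip : ∀ a b : V, H.Adj a b → (a ∈ A ∧ b ∈ B) ∨ (a ∈ B ∧ b ∈ A)) :
    (∃ M, IsMatchingSet H M ∧ ∀ a ∈ A, satV M a) ∨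
    (∃ S : Finset V, S ⊆ A ∧ S.Nonempty ∧ (S.biUnion (nbr H)).card < S.card ∧
      ∀ T ⊆ A, T.Nonempty → (T.biUnion (nbr H)).card < T.card → S.card ≤ T.card) := by
  classical
  by_cases hall : ∀ s : Finset {x // x ∈ A}, s.card ≤ (s.biUnion (fun a => nbr H a.1)).card
  · left
    obtain ⟨f, hfinj, hf⟩ := (Finset.all_card_le_biUnion_card_iff_exists_injective
      (fun a : {x // x ∈ A} => nbr H a.1)).mp hall
    refine ⟨A.attach.image (fun a => s(a.1, f a)), ?_, ?_⟩
    · constructor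
      · intro e he
        simp only [Finset.coe_image, Set.mem_image, Finset.mem_coe, Finset.mem_attach,
          true_and] at he
        obtain ⟨a, -, rfl⟩ := he
        exact (mem_nbr.mp (hf a))
      · intro e he g hg hne v hv
        simp only [Finset.mem_image, Finset.mem_attach, true_and] at he hg
        obtain ⟨a, rfl⟩ := he
        obtain ⟨b, rfl⟩ := hg
        have haB : f a ∈ B := by
          rcases hbip _ _ (mem_nbr.mp (hf a)) with ⟨h1, h2⟩ | ⟨h1, h2⟩
          · exact h2
          · exact absurd a.2 (Finset.disjoint_right.mp hd h1)
        have hbB : f b ∈ B := by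
          rcases hbip _ _ (mem_nbr.mp (hf b)) with ⟨h1, h2⟩ | ⟨h1, h2⟩
          · exact h2
          · exact absurd b.2 (Finset.disjoint_right.mp hd h1)
        obtain ⟨hv1, hv2⟩ := hv
        rcases Sym2.mem_iff.mp hv1 with rfl | rfl <;> rcases Sym2.mem_iff.mp hv2 with h | h
        · exact hne (by have hab : a = b := Subtype.ext h; rw [hab])
        · exact Finset.disjoint_left.mp hd a.2 (h ▸ hbB)
        · exact Finset.disjoint_left.mp hd b.2 (h.symm ▸ haB)
        · exact hne (by have hab : a = b := hfinj h; rw [hab])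
    · intro a ha
      exact ⟨s(a, f ⟨a, ha⟩), Finset.mem_image.mpr ⟨⟨a, ha⟩, Finset.mem_attach _ _, rfl⟩, by simp⟩
  · right
    push_neg at hall
    obtain ⟨s, hs⟩ := hall
    have hSex : ∃ S : Finset V, S ⊆ A ∧ S.Nonempty ∧ (S.biUnion (nbr H)).card < S.card := by
      refine ⟨s.image (·.1), ?_, ?_, ?_⟩
      · intro v hv
        simp only [Finset.mem_image] at hv
        obtain ⟨a, -, rfl⟩ := hv
        exact a.2
      · rw [Finset.image_nonempty]
        rcases Finset.eq_empty_or_nonempty s with rfl | h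
        · simp at hs
        · exact h
      · rw [Finset.card_image_of_injective _ (fun a b hab => Subtype.ext hab)]
        have : (s.image (·.1)).biUnion (nbr H) = s.biUnion (fun a => nbr H a.1) := by
          ext v
          simp only [Finset.mem_biUnion, Finset.mem_image]
          constructor
          · rintro ⟨u, ⟨a, ha, rfl⟩, hv⟩; exact ⟨a, ha, hv⟩
          · rintro ⟨a, ha, hv⟩; exact ⟨a.1, ⟨a, ha, rfl⟩, hv⟩
        rw [this]
        exact hs
    -- take minimal-cardinality violator
    let VS : Finset (Finset V) := A.powerset.filter
      (fun S => S.Nonempty ∧ (S.biUnion (nbr H)).card < S.card)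
    have hVSne : VS.Nonempty := by
      obtain ⟨S, h1, h2, h3⟩ := hSex
      exact ⟨S, by simp [VS, Finset.mem_powerset, h1, h2, h3]⟩
    obtain ⟨S, hSmem, hSmin⟩ := VS.exists_min_image Finset.card hVSne
    simp only [VS, Finset.mem_filter, Finset.mem_powerset] at hSmem
    refine ⟨S, hSmem.1, hSmem.2.1, hSmem.2.2, ?_⟩
    intro T hT hTne hTcard
    exact hSmin T (by simp [VS, Finset.mem_powerset, hT, hTne, hTcard])


set_option linter.unusedSectionVars false

/-- Alternating-path predicate: `Good K A M a ℓ` means `ℓ` is an `M`-alternating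
path from an `M`-unsaturated vertex of `A` ending at `a` (listed reversed). -/
inductive Good (K : SimpleGraph V) (A : Finset V) (M : Finset (Sym2 V)) : V → List V → Prop
  | base {a : V} : a ∈ A → (∀ e ∈ M, a ∉ e) → Good K A M a [a]
  | cons {a b c : V} {ℓ : List V} : Good K A M a ℓ → K.Adj a b → s(b, c) ∈ M →
      b ∉ ℓ → c ∉ ℓ → Good K A M c (c :: b :: ℓ)

variable {K : SimpleGraph V} {A B : Finset V} {M : Finset (Sym2 V)}
  (hd : Disjoint A B)
  (hbip : ∀ a b : V, K.Adj a b → (a ∈ A ∧ b ∈ B) ∨ (a ∈ B ∧ b ∈ A))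
  (hM : IsMatchingSet K M)

lemma Good.head_mem {a : V} {ℓ : List V} (h : Good K A M a ℓ) : a ∈ ℓ := by
  cases h <;> simp

include hd hbip hM in
lemma Good.mem_A {a : V} {ℓ : List V} (h : Good K A M a ℓ) : a ∈ A := by
  induction h with
  | base h1 _ => exact h1
  | @cons a b c ℓ hg hadj hbc _ _ ih =>
    have hadj2 : K.Adj b c := (SimpleGraph.mem_edgeSet _).mp (hM.1 hbc)
    have hbB : b ∈ B := by
      rcases hbip a b hadj with ⟨h1, h2⟩ | ⟨h1, h2⟩
      · exact h2
      · exact (Finset.disjoint_left.mp hd ih h1).elim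
    rcases hbip b c hadj2 with ⟨h1, h2⟩ | ⟨h1, h2⟩
    · exact absurd h1 (Finset.disjoint_right.mp hd hbB)
    · exact h2

include hM in
lemma Good.closed {a : V} {ℓ : List V} (h : Good K A M a ℓ) :
    ∀ v ∈ ℓ, ∀ u, s(u, v) ∈ M → u ∈ ℓ := by
  induction h with
  | base h1 h2 =>
    intro v hv u hu
    simp only [List.mem_singleton] at hv
    subst hv
    exact absurd (Sym2.mem_mk_right u v) (h2 _ hu)
  | @cons a b c ℓ hg hadj hbc hbl hcl ih =>
    intro v hv u hu
    rcases List.mem_cons.mp hv with rfl | hv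
    · -- v = c, partner is b
      have : s(u, v) = s(b, v) := partner_unique hM hu hbc (Sym2.mem_mk_right u v)
        (Sym2.mem_mk_right b v)
      have : u = b := Sym2.congr_left.mp this
      subst this
      simp
    rcases List.mem_cons.mp hv with rfl | hv
    · -- v = b, partner is c
      have : s(u, v) = s(v, c) := partner_unique hM hu hbc (Sym2.mem_mk_right u v)
        (Sym2.mem_mk_left v c)
      have : u = c := by
        rw [Sym2.eq_swap (a := v) (b := c)] at this
        exact Sym2.congr_left.mp this
      subst this
      simp
    · exact List.mem_cons_of_mem _ (List.mem_cons_of_mem _ (ih v hv u hu))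

include hd hbip hM in
/-- Flipping along the alternating path. -/
lemma Good.flip {a : V} {ℓ : List V} (h : Good K A M a ℓ) :
    ∃ (N : Finset (Sym2 V)) (α : V), IsMatchingSet K N ∧ N.card = M.card ∧
      α ∈ A ∧ (∀ e ∈ M, α ∉ e) ∧
      (∀ v : V, satV N v ↔ ((satV M v ∨ v = α) ∧ v ≠ a)) ∧
      (satV M a ∨ a = α) ∧
      (∀ e ∈ M, (∀ u, u ∈ e → u ∉ ℓ) → e ∈ N) ∧
      (∀ e ∈ N, e ∈ M ∨ ∃ u, u ∈ e ∧ u ∈ ℓ) := by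
  induction h with
  | @base a h1 h2 =>
    refine ⟨M, a, hM, rfl, h1, h2, ?_, Or.inr rfl, fun e he _ => he, fun e he => Or.inl he⟩
    intro v
    constructor
    · intro hv
      refine ⟨Or.inl hv, ?_⟩
      rintro rfl
      obtain ⟨e, he, hve⟩ := hv
      exact h2 e he hve
    · rintro ⟨hv | rfl, hva⟩
      · exact hv
      · exact absurd rfl hva
  | @cons a b c ℓ hg hadj hbc hbl hcl ih =>
    obtain ⟨N, α, hN, hcard, hαA, hαuns, hsat, hsata, hkeep, hfrom⟩ := ih
    have haA : a ∈ A := hg.mem_A hd hbip hM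
    have hadj2 : K.Adj b c := (SimpleGraph.mem_edgeSet _).mp (hM.1 hbc)
    have hbB : b ∈ B := by
      rcases hbip a b hadj with ⟨h1, h2⟩ | ⟨h1, h2⟩
      · exact h2
      · exact (Finset.disjoint_right.mp hd h1 haA).elim
    have hcA : c ∈ A := by
      rcases hbip b c hadj2 with ⟨h1, h2⟩ | ⟨h1, h2⟩
      · exact absurd h1 (Finset.disjoint_right.mp hd hbB)
      · exact h2
    have hba : b ≠ a := fun hh => Finset.disjoint_right.mp hd hbB (hh ▸ haA)
    have hbα : b ≠ α := fun hh => Finset.disjoint_right.mp hd hbB (hh ▸ hαA)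
    have hbc_mem_N : s(b, c) ∈ N := hkeep _ hbc (by
      intro u hu
      rcases Sym2.mem_iff.mp hu with rfl | rfl
      · exact hbl
      · exact hcl)
    have hbcne : b ≠ c := hadj2.ne
    have hab_ne : a ≠ b := fun hh => hba hh.symm
    have haN_unsat : ∀ e ∈ N, a ∉ e := by
      intro e he hae
      have : satV N a := ⟨e, he, hae⟩
      rw [hsat a] at this
      exact this.2 rfl
    have hca : c ≠ a := by
      intro hh
      exact hcl (hh ▸ hg.head_mem)
    -- the new matching
    refine ⟨insert s(a, b) (N.erase s(b, c)), α, ?_, ?_, hαA, hαuns, ?_, Or.inl ⟨_, hbc, by simp⟩,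
      ?_, ?_⟩
    · -- matching
      constructor
      · intro e he
        simp only [Finset.coe_insert, Set.mem_insert_iff, Finset.coe_erase, Set.mem_diff,
          Finset.mem_coe] at he
        rcases he with rfl | ⟨he, -⟩
        · exact hadj
        · exact hN.1 he
      · intro e he f hf hef v hv
        have key : ∀ g ∈ N.erase s(b, c), ∀ u, u ∈ s(a, b) → u ∉ g := by
          intro g hgmem u hu hug
          rcases Sym2.mem_iff.mp hu with rfl | h2
          · exact haN_unsat g (Finset.mem_of_mem_erase hgmem) hug
          · rw [h2] at hug
            have := partner_unique hN (Finset.mem_of_mem_erase hgmem) hbc_mem_N hug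
              (Sym2.mem_mk_left b c)
            exact (Finset.ne_of_mem_erase hgmem) this
        rcases Finset.mem_insert.mp he with rfl | he <;>
          rcases Finset.mem_insert.mp hf with rfl | hf
        · exact hef rfl
        · exact key f hf v hv.1 hv.2
        · exact key e he v hv.2 hv.1
        · exact hN.2 e (Finset.mem_of_mem_erase he) f (Finset.mem_of_mem_erase hf) hef v hv
    · -- cardinality
      have h1 : s(a, b) ∉ N.erase s(b, c) := by
        intro hmem
        exact haN_unsat _ (Finset.mem_of_mem_erase hmem) (Sym2.mem_mk_left a b)
      rw [Finset.card_insert_of_notMem h1, Finset.card_erase_of_mem hbc_mem_N, hcard]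
      have : M.card ≠ 0 := by
        intro hh
        rw [Finset.card_eq_zero] at hh
        subst hh
        exact absurd hbc (by simp)
      omega
    · -- saturation characterization
      intro v
      have hNv := hsat v
      constructor
      · rintro ⟨e, he, hve⟩
        rcases Finset.mem_insert.mp he with rfl | he
        · rcases Sym2.mem_iff.mp hve with rfl | rfl
          · -- v = a
            refine ⟨?_, hca.symm⟩
            rcases hsata with h | h
            · exact Or.inl h
            · exact Or.inr h
          · -- v = b
            refine ⟨Or.inl ⟨_, hbc, by simp⟩, hbcne⟩
        · have hvN : satV N v := ⟨e, Finset.mem_of_mem_erase he, hve⟩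
          have := (hsat v).mp hvN
          refine ⟨this.1, ?_⟩
          rintro rfl
          -- v = c : but c's unique N-edge was erased
          have := partner_unique hN (Finset.mem_of_mem_erase he) hbc_mem_N hve
            (Sym2.mem_mk_right b v)
          exact (Finset.ne_of_mem_erase he) this
      · rintro ⟨hv1, hv2⟩
        by_cases hva : v = a
        · exact ⟨s(a, b), Finset.mem_insert_self _ _, hva ▸ Sym2.mem_mk_left a b⟩
        by_cases hvb : v = b
        · exact ⟨s(a, b), Finset.mem_insert_self _ _, hvb ▸ Sym2.mem_mk_right a b⟩
        -- v ≠ a, b, c: use N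
        have hvN : satV N v := (hsat v).mpr ⟨hv1, hva⟩
        obtain ⟨e, he, hve⟩ := hvN
        refine ⟨e, Finset.mem_insert_of_mem (Finset.mem_erase_of_ne_of_mem ?_ he), hve⟩
        intro hh
        subst hh
        rcases Sym2.mem_iff.mp hve with rfl | rfl
        · exact hvb rfl
        · exact hv2 rfl
    · -- edges of M away from the path survive
      intro e he hnotin
      have h1 : e ∈ N := hkeep e he (by
        intro u hu hul
        exact hnotin u hu (List.mem_cons_of_mem _ (List.mem_cons_of_mem _ hul)))
      have h2 : e ≠ s(b, c) := by
        intro hh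
        subst hh
        exact hnotin b (Sym2.mem_mk_left b c) (by simp)
      exact Finset.mem_insert_of_mem (Finset.mem_erase_of_ne_of_mem h2 h1)
    · -- edges of the new matching
      intro e he
      rcases Finset.mem_insert.mp he with rfl | he
      · exact Or.inr ⟨b, Sym2.mem_mk_right a b, by simp⟩
      · rcases hfrom e (Finset.mem_of_mem_erase he) with h | ⟨u, hu, hul⟩
        · exact Or.inl h
        · exact Or.inr ⟨u, hu, List.mem_cons_of_mem _ (List.mem_cons_of_mem _ hul)⟩


include hd hbip hM in
lemma Good.step {a : V} {ℓ : List V} (h : Good K A M a ℓ) :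
    ∀ b c : V, b ∈ ℓ → s(b, c) ∈ M → b ∉ A → ∃ ℓ', Good K A M c ℓ' := by
  induction h with
  | @base a h1 h2 =>
    intro b c hb hbc hbA
    simp only [List.mem_singleton] at hb
    subst hb
    exact absurd (Sym2.mem_mk_left b c) (h2 _ hbc)
  | @cons a b₀ c₀ ℓ hg hadj hbc₀ hbl hcl ih =>
    intro b c hb hbc hbA
    rcases List.mem_cons.mp hb with rfl | hb
    · exact absurd ((Good.cons hg hadj hbc₀ hbl hcl).mem_A hd hbip hM) hbA
    · rcases List.mem_cons.mp hb with rfl | hb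
      · have heq : s(b, c) = s(b, c₀) := partner_unique hM hbc hbc₀ (Sym2.mem_mk_left b c)
          (Sym2.mem_mk_left b c₀)
        have : c = c₀ := Sym2.congr_right.mp heq
        subst this
        exact ⟨_, Good.cons hg hadj hbc₀ hbl hcl⟩
      · exact ih b c hb hbc hbA

lemma augment_absurd {K : SimpleGraph V} (hequi : Equimatchable K)
    {M₀ N : Finset (Sym2 V)} (hM₀ : IsMaximalMatching K M₀) (hN : IsMatchingSet K N)
    (hc : M₀.card < N.card) : False := by
  obtain ⟨N', hsub, hN'⟩ := exists_maximalMatching_contains K N hN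
  have h1 := hequi M₀ N' hM₀ hN'
  have h2 : N.card ≤ N'.card := Finset.card_le_card hsub
  omega

lemma walk_cross {K : SimpleGraph V} (P : Set V) :
    ∀ {u v : V} (_ : K.Walk u v), u ∈ P → v ∉ P →
      ∃ p q, K.Adj p q ∧ p ∈ P ∧ q ∉ P := by
  intro u v p
  induction p with
  | nil => intro h1 h2; exact absurd h1 h2
  | @cons u u' v hadj q ih =>
    intro h1 h2
    by_cases h' : u' ∈ P
    · exact ih h' h2
    · exact ⟨u, u', hadj, h1, h'⟩

lemma LPP {K : SimpleGraph V} {A B : Finset V} (hd : Disjoint A B)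
    (hbip : ∀ a b : V, K.Adj a b → (a ∈ A ∧ b ∈ B) ∨ (a ∈ B ∧ b ∈ A))
    (hconn : ∀ u v : V, u ∈ K.support → v ∈ K.support → K.Reachable u v)
    (hequi : Equimatchable K)
    {M₀ : Finset (Sym2 V)} (hM₀ : IsMaximalMatching K M₀) :
    (∀ a ∈ A, a ∈ K.support → satV M₀ a) ∨ (∀ b ∈ B, b ∈ K.support → satV M₀ b) := by
  classical
  by_contra hcon
  push_neg at hcon
  obtain ⟨⟨a₀, ha₀A, ha₀s, ha₀uns⟩, ⟨b₀, hb₀B, hb₀s, hb₀uns⟩⟩ := hcon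
  have hM := hM₀.1
  have ha₀unsat : ∀ e ∈ M₀, a₀ ∉ e := fun e he hae => ha₀uns ⟨e, he, hae⟩
  set SS : Set V := {v | ∃ ℓ, Good K A M₀ v ℓ} with hSSdef
  set TT : Set V := {v | ∃ u ∈ SS, K.Adj u v} with hTTdef
  have hSSA : ∀ v ∈ SS, v ∈ A := by
    rintro v ⟨ℓ, hℓ⟩
    exact hℓ.mem_A hd hbip hM
  have hTTB : ∀ v ∈ TT, v ∈ B := by
    rintro v ⟨u, hu, hadj⟩
    rcases hbip u v hadj with ⟨h1, h2⟩ | ⟨h1, h2⟩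
    · exact h2
    · exact (Finset.disjoint_left.mp hd (hSSA u hu) h1).elim
  have hTTsat : ∀ v ∈ TT, satV M₀ v := by
    rintro v ⟨u, ⟨ℓ, hℓ⟩, hadj⟩
    by_contra hvuns
    obtain ⟨N, α, hN, hcard, hαA, hαuns, hsat, -, -, -⟩ := hℓ.flip hd hbip hM
    have hvB : v ∈ B := hTTB v ⟨u, ⟨ℓ, hℓ⟩, hadj⟩
    have hvN : ¬ satV N v := by
      rw [hsat v]
      rintro ⟨h1 | h1, -⟩
      · exact hvuns h1
      · exact Finset.disjoint_right.mp hd hvB (h1 ▸ hαA)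
    have huN : ¬ satV N u := by
      rw [hsat u]
      rintro ⟨-, h2⟩
      exact h2 rfl
    have hne : s(u, v) ∉ N := fun hh => hvN ⟨_, hh, Sym2.mem_mk_right u v⟩
    have hbig : IsMatchingSet K (insert s(u, v) N) := by
      constructor
      · intro e he
        rcases Finset.mem_insert.mp (Finset.mem_coe.mp he) with rfl | he'
        · exact hadj
        · exact hN.1 he'
      · intro e he f hf hef w hw
        rcases Finset.mem_insert.mp he with heq | heN
        · rcases Finset.mem_insert.mp hf with hfq | hfN
          · exact hef (heq.trans hfq.symm)
          · subst heq
            rcases Sym2.mem_iff.mp hw.1 with h | h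
            · exact huN ⟨f, hfN, h ▸ hw.2⟩
            · exact hvN ⟨f, hfN, h ▸ hw.2⟩
        · rcases Finset.mem_insert.mp hf with hfq | hfN
          · subst hfq
            rcases Sym2.mem_iff.mp hw.2 with h | h
            · exact huN ⟨e, heN, h ▸ hw.1⟩
            · exact hvN ⟨e, heN, h ▸ hw.1⟩
          · exact hN.2 e heN f hfN hef w hw
    exact augment_absurd hequi hM₀ hbig (by
      rw [Finset.card_insert_of_notMem hne, hcard]; omega)
  have hb₀notin : b₀ ∉ SS ∪ TT := by
    rintro (h | h)
    · exact Finset.disjoint_right.mp hd hb₀B (hSSA _ h)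
    · exact hb₀uns (hTTsat _ h)
  have ha₀in : a₀ ∈ SS ∪ TT := Or.inl ⟨[a₀], Good.base ha₀A ha₀unsat⟩
  obtain ⟨p, q, hpq, hpin, hqout⟩ :=
    walk_cross (SS ∪ TT) (hconn a₀ b₀ ha₀s hb₀s).some ha₀in hb₀notin
  have hpTT : p ∈ TT := by
    rcases hpin with h | h
    · exact absurd (Or.inr ⟨p, h, hpq⟩ : q ∈ SS ∪ TT) hqout
    · exact h
  have hpB : p ∈ B := hTTB p hpTT
  have hqA : q ∈ A := by
    rcases hbip p q hpq with ⟨h1, h2⟩ | ⟨h1, h2⟩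
    · exact (Finset.disjoint_left.mp hd h1 hpB).elim
    · exact h2
  obtain ⟨sp, hsp, hspadj⟩ := exists_partner hM (hTTsat p hpTT)
  have hspSS : sp ∈ SS := by
    obtain ⟨u, huSS, huadj⟩ := hpTT
    obtain ⟨ℓ, hℓ⟩ := huSS
    by_cases hpl : p ∈ ℓ
    · exact hℓ.step hd hbip hM p sp hpl hsp (fun hh => Finset.disjoint_left.mp hd hh hpB)
    · by_cases hsl : sp ∈ ℓ
      · exact absurd (hℓ.closed hM sp hsl p hsp) hpl
      · exact ⟨_, Good.cons hℓ huadj hsp hpl hsl⟩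
  have hqsat : satV M₀ q := by
    by_contra hquns
    have : q ∈ SS := ⟨[q], Good.base hqA (fun e he hqe => hquns ⟨e, he, hqe⟩)⟩
    exact hqout (Or.inl this)
  obtain ⟨bq, hbq, hbqadj⟩ := exists_partner hM hqsat
  have hbq' : s(bq, q) ∈ M₀ := by rwa [Sym2.eq_swap]
  have hbqB : bq ∈ B := by
    rcases hbip q bq hbqadj with ⟨h1, h2⟩ | ⟨h1, h2⟩
    · exact h2
    · exact (Finset.disjoint_left.mp hd hqA h1).elim
  have hbqnotTT : bq ∉ TT := by
    intro hTT'
    obtain ⟨u, huSS, huadj⟩ := hTT'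
    obtain ⟨ℓ, hℓ⟩ := huSS
    have : ∃ ℓ', Good K A M₀ q ℓ' := by
      by_cases hbl : bq ∈ ℓ
      · exact hℓ.step hd hbip hM bq q hbl hbq'
          (fun hh => Finset.disjoint_left.mp hd hh hbqB)
      · by_cases hql : q ∈ ℓ
        · exact absurd (hℓ.closed hM q hql bq hbq') hbl
        · exact ⟨_, Good.cons hℓ huadj hbq' hbl hql⟩
    exact hqout (Or.inl this)
  have hpsp_ne : s(p, sp) ≠ s(q, bq) := by
    intro hh
    have : p ∈ s(q, bq) := hh ▸ Sym2.mem_mk_left p sp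
    rcases Sym2.mem_iff.mp this with rfl | rfl
    · exact Finset.disjoint_left.mp hd hqA hpB
    · exact hbqnotTT hpTT
  have hspA : sp ∈ A := hSSA _ hspSS
  set M' : Finset (Sym2 V) := insert s(p, q) ((M₀.erase s(p, sp)).erase s(q, bq)) with hM'def
  have hsatM' : ∀ v : V, satV M' v ↔ (v = p ∨ v = q ∨ (satV M₀ v ∧ v ≠ sp ∧ v ≠ bq)) := by
    intro v
    constructor
    · rintro ⟨e, he, hve⟩
      rcases Finset.mem_insert.mp he with rfl | he
      · rcases Sym2.mem_iff.mp hve with rfl | rfl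
        · exact Or.inl rfl
        · exact Or.inr (Or.inl rfl)
      · have heM := Finset.mem_of_mem_erase (Finset.mem_of_mem_erase he)
        refine Or.inr (Or.inr ⟨⟨e, heM, hve⟩, ?_, ?_⟩)
        · intro hh
          rw [hh] at hve
          have := partner_unique hM heM hsp hve (Sym2.mem_mk_right p sp)
          exact Finset.ne_of_mem_erase (Finset.mem_of_mem_erase he) this
        · intro hh
          rw [hh] at hve
          have := partner_unique hM heM hbq hve (Sym2.mem_mk_right q bq)
          exact Finset.ne_of_mem_erase he this
    · rintro (h | h | ⟨hsat₀, hv1, hv2⟩)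
      · exact ⟨s(p, q), Finset.mem_insert_self _ _, by rw [h]; exact Sym2.mem_mk_left p q⟩
      · exact ⟨s(p, q), Finset.mem_insert_self _ _, by rw [h]; exact Sym2.mem_mk_right p q⟩
      · by_cases hvp : v = p
        · exact ⟨s(p, q), Finset.mem_insert_self _ _, by rw [hvp]; exact Sym2.mem_mk_left p q⟩
        by_cases hvq : v = q
        · exact ⟨s(p, q), Finset.mem_insert_self _ _, by rw [hvq]; exact Sym2.mem_mk_right p q⟩
        obtain ⟨e, he, hve⟩ := hsat₀
        refine ⟨e, Finset.mem_insert_of_mem (Finset.mem_erase_of_ne_of_mem ?_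
          (Finset.mem_erase_of_ne_of_mem ?_ he)), hve⟩
        · intro hh
          rw [hh] at hve
          rcases Sym2.mem_iff.mp hve with h2 | h2
          · exact hvq h2
          · exact hv2 h2
        · intro hh
          rw [hh] at hve
          rcases Sym2.mem_iff.mp hve with h2 | h2
          · exact hvp h2
          · exact hv1 h2
  have hM'match : IsMatchingSet K M' := by
    constructor
    · intro e he
      rcases Finset.mem_insert.mp (Finset.mem_coe.mp he) with rfl | he'
      · exact hpq
      · exact hM.1 (Finset.mem_of_mem_erase (Finset.mem_of_mem_erase he'))
    · intro e he f hf hef v hv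
      have key : ∀ g ∈ (M₀.erase s(p, sp)).erase s(q, bq), ∀ u, u ∈ s(p, q) → u ∉ g := by
        intro g hgmem u hu hug
        have hgM := Finset.mem_of_mem_erase (Finset.mem_of_mem_erase hgmem)
        rcases Sym2.mem_iff.mp hu with rfl | h2
        · have := partner_unique hM hgM hsp hug (Sym2.mem_mk_left u sp)
          exact Finset.ne_of_mem_erase (Finset.mem_of_mem_erase hgmem) this
        · rw [h2] at hug
          have := partner_unique hM hgM hbq hug (Sym2.mem_mk_left q bq)
          exact Finset.ne_of_mem_erase hgmem this
      rcases Finset.mem_insert.mp he with rfl | he <;>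
        rcases Finset.mem_insert.mp hf with rfl | hf
      · exact hef rfl
      · exact key f hf v hv.1 hv.2
      · exact key e he v hv.2 hv.1
      · exact hM.2 e (Finset.mem_of_mem_erase (Finset.mem_of_mem_erase he)) f
          (Finset.mem_of_mem_erase (Finset.mem_of_mem_erase hf)) hef v hv
  have hM'max : IsMaximalMatching K M' := by
    refine ⟨hM'match, ?_⟩
    intro e he
    obtain ⟨u, v, huv, rfl⟩ := edge_repr he
    have hsatuv : satV M' u ∨ satV M' v := by
      by_contra hcc
      push_neg at hcc
      obtain ⟨h1, h2⟩ := hcc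
      rw [hsatM'] at h1 h2
      push_neg at h1 h2
      obtain ⟨hup, huq, hu3⟩ := h1
      obtain ⟨hvp, hvq, hv3⟩ := h2
      -- for a vertex z with the "bad" property and the other endpoint…
      -- one endpoint is in A, the other in B
      have key2 : ∀ z z' : V, K.Adj z z' → z ∈ A →
          (satV M₀ z → z ≠ sp ∧ z ≠ bq → False) →
          (satV M₀ z' → z' ≠ sp ∧ z' ≠ bq → False) → False := by
        intro z z' hadj hzA hbad hbad'
        have hz'B : z' ∈ B := by
          rcases hbip z z' hadj with ⟨e1, e2⟩ | ⟨e1, e2⟩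
          · exact e2
          · exact (Finset.disjoint_left.mp hd hzA e1).elim
        have hzSS : z ∈ SS := by
          by_cases hzsat : satV M₀ z
          · by_cases hzsp : z = sp
            · exact hzsp ▸ hspSS
            · by_cases hzbq : z = bq
              · exact absurd (hzbq ▸ hzA : bq ∈ A) (Finset.disjoint_right.mp hd hbqB)
              · exact (hbad hzsat ⟨hzsp, hzbq⟩).elim
          · exact ⟨[z], Good.base hzA (fun e' he' hze => hzsat ⟨e', he', hze⟩)⟩
        have hz'TT : z' ∈ TT := ⟨z, hzSS, hadj⟩
        have hz'sat : satV M₀ z' := hTTsat _ hz'TT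
        have hz'sp : z' ≠ sp := fun hh => Finset.disjoint_right.mp hd hz'B (hh ▸ hspA)
        have hz'bq : z' ≠ bq := fun hh => hbqnotTT (hh ▸ hz'TT)
        exact hbad' hz'sat ⟨hz'sp, hz'bq⟩
      rcases hbip u v huv with ⟨e1, e2⟩ | ⟨e1, e2⟩
      · exact key2 u v huv e1 (fun hs hne => hne.2 (hu3 hs hne.1))
          (fun hs hne => hne.2 (hv3 hs hne.1))
      · exact key2 v u huv.symm e2 (fun hs hne => hne.2 (hv3 hs hne.1))
          (fun hs hne => hne.2 (hu3 hs hne.1))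
    rcases hsatuv with ⟨f, hf, hvf⟩ | ⟨f, hf, hvf⟩
    · exact ⟨f, hf, u, Sym2.mem_mk_left u v, hvf⟩
    · exact ⟨f, hf, v, Sym2.mem_mk_right u v, hvf⟩
  -- cardinality contradiction
  have hbq_in_erase : s(q, bq) ∈ M₀.erase s(p, sp) :=
    Finset.mem_erase_of_ne_of_mem (Ne.symm hpsp_ne) hbq
  have hpq_notmem : s(p, q) ∉ (M₀.erase s(p, sp)).erase s(q, bq) := by
    intro hh
    have h1 := Finset.mem_of_mem_erase (Finset.mem_of_mem_erase hh)
    have h2 := partner_unique hM h1 hsp (Sym2.mem_mk_left p q) (Sym2.mem_mk_left p sp)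
    have h3 : q = sp := Sym2.congr_right.mp h2
    exact hqout (Or.inl (h3 ▸ hspSS))
  have hcard2 : 2 ≤ M₀.card := by
    have := Finset.one_lt_card.mpr ⟨s(p, sp), hsp, s(q, bq), hbq, hpsp_ne⟩
    omega
  have hcardM' : M'.card = M₀.card - 1 := by
    rw [hM'def, Finset.card_insert_of_notMem hpq_notmem,
      Finset.card_erase_of_mem hbq_in_erase, Finset.card_erase_of_mem hsp]
    omega
  have := hequi M₀ M' hM₀ hM'max
  omega

/-! ### Restricted graphs and the deleted-vertex graph -/

def restr (H : SimpleGraph V) (P : Set V) : SimpleGraph V where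
  Adj u v := H.Adj u v ∧ u ∈ P ∧ v ∈ P
  symm := ⟨fun u v ⟨h1, h2, h3⟩ => ⟨h1.symm, h3, h2⟩⟩
  loopless := ⟨fun u ⟨h1, _, _⟩ => H.irrefl h1⟩

lemma restr_adj {H : SimpleGraph V} {P : Set V} {u v : V} :
    (restr H P).Adj u v ↔ H.Adj u v ∧ u ∈ P ∧ v ∈ P := Iff.rfl

lemma restr_verts {H : SimpleGraph V} {P : Set V} {M : Finset (Sym2 V)}
    (hM : ↑M ⊆ (restr H P).edgeSet) : ∀ e ∈ M, ∀ v ∈ e, v ∈ P := by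
  intro e he v hv
  obtain ⟨a, b, hab, rfl⟩ := edge_repr (hM he)
  rcases Sym2.mem_iff.mp hv with rfl | rfl
  · exact hab.2.1
  · exact hab.2.2

lemma matching_empty (K : SimpleGraph V) : IsMatchingSet K ∅ := by
  constructor
  · simp
  · intro e he
    simp at he

lemma exists_maximalMatching (K : SimpleGraph V) : ∃ N, IsMaximalMatching K N := by
  obtain ⟨N, -, hN⟩ := exists_maximalMatching_contains K ∅ (matching_empty K)
  exact ⟨N, hN⟩

lemma wed_equi {K : SimpleGraph V} (h : WellEdgeDominated K) : Equimatchable K := by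
  intro M₁ M₂ h1 h2
  exact h M₁ M₂ (maximalMatching_isMinEDS h1) (maximalMatching_isMinEDS h2)

lemma mem_support_of_reachable {K : SimpleGraph V} {u v : V} (h : K.Reachable u v)
    (hne : u ≠ v) : u ∈ K.support := by
  obtain ⟨p⟩ := h
  cases p with
  | nil => exact absurd rfl hne
  | cons h' p' => exact ⟨_, h'⟩

/-- union of maximal matchings on complementary closed parts -/
lemma union_maximalMatching {H : SimpleGraph V} {P : Set V}
    (hP : ∀ u v : V, H.Adj u v → (u ∈ P ↔ v ∈ P))
    {M₁ M₂ : Finset (Sym2 V)} (h1 : IsMaximalMatching (restr H P) M₁)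
    (h2 : IsMaximalMatching (restr H Pᶜ) M₂) :
    IsMaximalMatching H (M₁ ∪ M₂) ∧ Disjoint M₁ M₂ := by
  have hv1 := restr_verts h1.1.1
  have hv2 := restr_verts h2.1.1
  have hdisj : Disjoint M₁ M₂ := by
    rw [Finset.disjoint_left]
    intro e he1 he2
    obtain ⟨a, b, hab, rfl⟩ := edge_repr (h1.1.1 he1)
    exact (hv2 _ he2 a (Sym2.mem_mk_left a b)) hab.2.1
  refine ⟨⟨⟨?_, ?_⟩, ?_⟩, hdisj⟩
  · intro e he
    rcases Finset.mem_union.mp (Finset.mem_coe.mp he) with h | h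
    · obtain ⟨a, b, hab, rfl⟩ := edge_repr (h1.1.1 h)
      exact (SimpleGraph.mem_edgeSet _).mpr hab.1
    · obtain ⟨a, b, hab, rfl⟩ := edge_repr (h2.1.1 h)
      exact (SimpleGraph.mem_edgeSet _).mpr hab.1
  · intro e he f hf hef v hv
    rcases Finset.mem_union.mp he with he' | he' <;> rcases Finset.mem_union.mp hf with hf' | hf'
    · exact h1.1.2 e he' f hf' hef v hv
    · exact absurd (hv1 e he' v hv.1) (hv2 f hf' v hv.2)
    · exact absurd (hv1 f hf' v hv.2) (hv2 e he' v hv.1)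
    · exact h2.1.2 e he' f hf' hef v hv
  · intro e he
    obtain ⟨a, b, hab, rfl⟩ := edge_repr he
    by_cases haP : a ∈ P
    · have hbP : b ∈ P := (hP a b hab).mp haP
      obtain ⟨f, hf, v, hv1', hv2'⟩ := h1.2 s(a, b) ((SimpleGraph.mem_edgeSet _).mpr
        ⟨hab, haP, hbP⟩)
      exact ⟨f, Finset.mem_union_left _ hf, v, hv1', hv2'⟩
    · have hbP : b ∉ P := fun hh => haP ((hP a b hab).mpr hh)
      obtain ⟨f, hf, v, hv1', hv2'⟩ := h2.2 s(a, b) ((SimpleGraph.mem_edgeSet _).mpr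
        ⟨hab, haP, hbP⟩)
      exact ⟨f, Finset.mem_union_right _ hf, v, hv1', hv2'⟩

/-! ### Transfer between the induced subgraph on `{v | v ≠ w}` and the restricted graph -/

section Transfer

variable {G' : SimpleGraph V} {w : V}

lemma psi_inj : Function.Injective (Sym2.map (Subtype.val : ↥({v : V | v ≠ w}) → V)) :=
  Sym2.map.injective Subtype.val_injective

lemma edge_down (e' : Sym2 ↥({v : V | v ≠ w})) :
    e' ∈ (G'.induce {v : V | v ≠ w}).edgeSet ↔
      (Sym2.map Subtype.val e') ∈ (restr G' {v : V | v ≠ w}).edgeSet := by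
  induction e' with
  | _ a b =>
    simp only [Sym2.map_pair_eq, SimpleGraph.mem_edgeSet]
    constructor
    · intro h
      exact ⟨h, a.2, b.2⟩
    · intro h
      exact h.1

lemma eds_transfer (D' : Finset (Sym2 ↥({v : V | v ≠ w}))) :
    IsEDS (G'.induce {v : V | v ≠ w}) D' ↔
      IsEDS (restr G' {v : V | v ≠ w}) (D'.image (Sym2.map Subtype.val)) := by
  constructor
  · rintro ⟨hsub, hdom⟩
    constructor
    · intro e he
      obtain ⟨e', he', rfl⟩ := Finset.mem_image.mp (Finset.mem_coe.mp he)
      exact (edge_down e').mp (hsub he')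
    · intro e he
      obtain ⟨a, b, hab, rfl⟩ := edge_repr he
      have hadj : (G'.induce {v : V | v ≠ w}).Adj ⟨a, hab.2.1⟩ ⟨b, hab.2.2⟩ := hab.1
      obtain ⟨f', hf', v', hv1, hv2⟩ := hdom s(⟨a, hab.2.1⟩, ⟨b, hab.2.2⟩)
        ((SimpleGraph.mem_edgeSet _).mpr hadj)
      refine ⟨f'.map Subtype.val, Finset.mem_image_of_mem _ hf', v'.1, ?_, ?_⟩
      · rcases Sym2.mem_iff.mp hv1 with rfl | rfl
        · exact Sym2.mem_mk_left a b
        · exact Sym2.mem_mk_right a b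
      · exact Sym2.mem_map.mpr ⟨v', hv2, rfl⟩
  · rintro ⟨hsub, hdom⟩
    constructor
    · intro e' he'
      exact (edge_down e').mpr (hsub (Finset.mem_coe.mpr
        (Finset.mem_image_of_mem _ (Finset.mem_coe.mp he'))))
    · intro e' he'
      obtain ⟨f, hf, v, hv1, hv2⟩ := hdom (e'.map Subtype.val) ((edge_down e').mp he')
      obtain ⟨f', hf', rfl⟩ := Finset.mem_image.mp hf
      obtain ⟨v1, hv1', heq1⟩ := Sym2.mem_map.mp hv1
      obtain ⟨v2, hv2', heq2⟩ := Sym2.mem_map.mp hv2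
      have : v1 = v2 := Subtype.ext (heq1.trans heq2.symm)
      subst this
      exact ⟨f', hf', v1, hv1', hv2'⟩

/-- lift a Finset of edges of the restricted graph to the induced subgraph -/
noncomputable def liftF (D : Finset (Sym2 V)) (hD : ↑D ⊆ (restr G' {v : V | v ≠ w}).edgeSet) :
    Finset (Sym2 ↥({v : V | v ≠ w})) :=
  D.attach.image (fun e => Sym2.attachWith e.1
    (fun a ha => restr_verts hD e.1 e.2 a ha))

lemma liftF_image (D : Finset (Sym2 V)) (hD : ↑D ⊆ (restr G' {v : V | v ≠ w}).edgeSet) :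
    (liftF D hD).image (Sym2.map Subtype.val) = D := by
  rw [liftF, Finset.image_image]
  have : ((fun e : Sym2 ↥({v : V | v ≠ w}) => Sym2.map Subtype.val e) ∘
      (fun e : {x // x ∈ D} => Sym2.attachWith e.1 (fun a ha => restr_verts hD e.1 e.2 a ha))) =
      (fun e : {x // x ∈ D} => e.1) := by
    funext e
    exact Sym2.attachWith_map_subtypeVal _
  rw [this, Finset.attach_image_val]

lemma liftF_card (D : Finset (Sym2 V)) (hD : ↑D ⊆ (restr G' {v : V | v ≠ w}).edgeSet) :
    (liftF D hD).card = D.card := by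
  have h1 : ((liftF D hD).image (Sym2.map Subtype.val)).card = (liftF D hD).card :=
    Finset.card_image_of_injective _ psi_inj
  rw [liftF_image D hD] at h1
  omega

lemma minEDS_transfer {D : Finset (Sym2 V)} (hmin : IsMinEDS (restr G' {v : V | v ≠ w}) D) :
    IsMinEDS (G'.induce {v : V | v ≠ w}) (liftF D hmin.1.1) := by
  constructor
  · rw [eds_transfer, liftF_image]
    exact hmin.1
  · intro F'' hF'' heds
    rw [eds_transfer] at heds
    have hsub : F''.image (Sym2.map Subtype.val) ⊆ D := by
      rw [← liftF_image D hmin.1.1]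
      exact Finset.image_subset_image hF''.subset
    have hlt : (F''.image (Sym2.map Subtype.val)).card < D.card := by
      rw [Finset.card_image_of_injective _ psi_inj, ← liftF_card D hmin.1.1]
      exact Finset.card_lt_card hF''
    exact hmin.2 _ (Finset.ssubset_iff_subset_ne.mpr ⟨hsub, fun hh => by
      rw [hh] at hlt; omega⟩) heds

lemma wed_restr (hdet : WellEdgeDominated (G'.induce {v : V | v ≠ w})) :
    WellEdgeDominated (restr G' {v : V | v ≠ w}) := by
  intro F₁ F₂ h1 h2
  have := hdet _ _ (minEDS_transfer h1) (minEDS_transfer h2)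
  rwa [liftF_card, liftF_card] at this

end Transfer

/-! ### every minimal EDS of a WED graph with an `A`-saturating matching has size `|A|` -/

lemma minEDS_card_of_asat {K : SimpleGraph V} {A B : Finset V} (hd : Disjoint A B)
    (hbip : ∀ a b : V, K.Adj a b → (a ∈ A ∧ b ∈ B) ∨ (a ∈ B ∧ b ∈ A))
    (hwed : WellEdgeDominated K) {M : Finset (Sym2 V)} (hM : IsMatchingSet K M)
    (hsat : ∀ a ∈ A, satV M a) :
    ∀ F : Finset (Sym2 V), IsMinEDS K F → F.card = A.card := by
  intro F hF
  obtain ⟨hmin, hcard⟩ := asat_isMinEDS hd hbip hM hsat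
  rw [← hcard]
  exact hwed F M hF hmin

/-- T1: a connected bipartite WED graph with `|A| < |B|` has an `A`-saturating matching. -/
lemma exists_asat_G (G' : SimpleGraph V) (A B : Finset V) (hd : Disjoint A B)
    (hbip : ∀ a b : V, G'.Adj a b → (a ∈ A ∧ b ∈ B) ∨ (a ∈ B ∧ b ∈ A))
    (hconn : G'.Connected) (hwed : WellEdgeDominated G') (hcard : A.card < B.card) :
    ∃ M, IsMatchingSet G' M ∧ ∀ a ∈ A, satV M a := by
  classical
  rcases Finset.eq_empty_or_nonempty A with rfl | ⟨a₀, ha₀⟩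
  · exact ⟨∅, matching_empty G', by simp⟩
  have hBne : B.Nonempty := Finset.card_pos.mp (by omega)
  obtain ⟨b₀, hb₀⟩ := hBne
  have hab : a₀ ≠ b₀ := fun hh => Finset.disjoint_left.mp hd ha₀ (hh ▸ hb₀)
  have hsupp : ∀ v : V, v ∈ G'.support := by
    intro v
    by_cases hv : v = b₀
    · exact mem_support_of_reachable (hconn.preconnected v a₀) (hv ▸ hab.symm)
    · exact mem_support_of_reachable (hconn.preconnected v b₀) hv
  obtain ⟨M₀, hM₀⟩ := exists_maximalMatching G'
  rcases LPP hd hbip (fun u v _ _ => hconn.preconnected u v) (wed_equi hwed) hM₀ with h | h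
  · exact ⟨M₀, hM₀.1, fun a ha => h a ha (hsupp a)⟩
  · have : B.card ≤ A.card := card_le_of_sat hd hbip hM₀.1 (fun b hb => h b hb (hsupp b))
    omega

lemma restr_edge_le {H : SimpleGraph V} {P : Set V} :
    (restr H P).edgeSet ⊆ H.edgeSet := by
  intro e he
  obtain ⟨a, b, hab, rfl⟩ := edge_repr he
  exact (SimpleGraph.mem_edgeSet _).mpr hab.1

lemma matching_restr_le {H : SimpleGraph V} {P : Set V} {M : Finset (Sym2 V)}
    (hM : IsMatchingSet (restr H P) M) : IsMatchingSet H M :=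
  ⟨fun e he => restr_edge_le (hM.1 he), hM.2⟩

/-- T2: under the hypotheses of the main theorem, `G' - w` has an `A`-saturating matching. -/
lemma exists_asat_H (G' : SimpleGraph V) (A B : Finset V) (w : V)
    (hd : Disjoint A B)
    (hbip : ∀ a b : V, G'.Adj a b → (a ∈ A ∧ b ∈ B) ∨ (a ∈ B ∧ b ∈ A))
    (hconn : G'.Connected) (hcard : A.card < B.card) (hw : w ∈ B)
    (hwedH : WellEdgeDominated (restr G' {v : V | v ≠ w}))
    (hkG : ∀ N, IsMaximalMatching G' N → N.card = A.card) :
    ∃ M, IsMatchingSet (restr G' {v : V | v ≠ w}) M ∧ ∀ a ∈ A, satV M a := by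
  classical
  set H : SimpleGraph V := restr G' {v : V | v ≠ w} with hHdef
  have hbipH : ∀ a b : V, H.Adj a b → (a ∈ A ∧ b ∈ B) ∨ (a ∈ B ∧ b ∈ A) :=
    fun a b hab => hbip a b hab.1
  rcases exists_asat_or_violator H A B hd hbipH with h | ⟨S, hSA, hSne, hSdef, hSmin⟩
  · exact h
  exfalso
  obtain ⟨s₀, hs₀S⟩ := hSne
  have hs₀A : s₀ ∈ A := hSA hs₀S
  set C : Set V := {v | H.Reachable s₀ v} with hCdef
  have hs₀C : s₀ ∈ C := by exact SimpleGraph.Reachable.refl s₀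
  have hCcl : ∀ u v : V, H.Adj u v → u ∈ C → v ∈ C := by
    intro u v hadj hu
    exact SimpleGraph.Reachable.trans hu ⟨hadj.toWalk⟩
  have hCcl' : ∀ u v : V, H.Adj u v → v ∈ C → u ∈ C := by
    intro u v hadj hv
    exact hCcl v u hadj.symm hv
  have hwC : w ∉ C := by
    intro hh
    have hne : s₀ ≠ w := fun h2 => Finset.disjoint_left.mp hd hs₀A (h2 ▸ hw)
    have : w ∈ H.support := mem_support_of_reachable (hh : H.Reachable s₀ w).symm
      (Ne.symm hne)
    obtain ⟨u, hu⟩ := this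
    exact hu.2.1 rfl
  -- S lies inside C
  have hSC : ∀ s ∈ S, s ∈ C := by
    by_contra hcon
    push_neg at hcon
    set S₁ : Finset V := S.filter (· ∈ C) with hS₁
    set S₂ : Finset V := S.filter (· ∉ C) with hS₂
    obtain ⟨s₂, hs₂S, hs₂C⟩ := hcon
    have hS₁ne : S₁.Nonempty := ⟨s₀, Finset.mem_filter.mpr ⟨hs₀S, hs₀C⟩⟩
    have hS₂ne : S₂.Nonempty := ⟨s₂, Finset.mem_filter.mpr ⟨hs₂S, hs₂C⟩⟩
    have hcard₁ : S₁.card < S.card := by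
      apply Finset.card_lt_card
      refine ⟨Finset.filter_subset _ _, fun hh => ?_⟩
      obtain ⟨v, hv⟩ := hS₂ne
      have := hh (Finset.mem_filter.mp hv).1
      exact (Finset.mem_filter.mp hv).2 (Finset.mem_filter.mp this).2
    have hcard₂ : S₂.card < S.card := by
      apply Finset.card_lt_card
      refine ⟨Finset.filter_subset _ _, fun hh => ?_⟩
      have := hh (Finset.mem_filter.mp (Finset.mem_filter.mpr ⟨hs₀S, hs₀C⟩ : s₀ ∈ S₁)).1
      exact (Finset.mem_filter.mp this).2 hs₀C
    have hok₁ : S₁.card ≤ (S₁.biUnion (nbr H)).card := by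
      by_contra hk
      push_neg at hk
      exact absurd (hSmin S₁ (hS₁.symm ▸ (Finset.filter_subset _ _).trans hSA) hS₁ne hk) (by omega)
    have hok₂ : S₂.card ≤ (S₂.biUnion (nbr H)).card := by
      by_contra hk
      push_neg at hk
      exact absurd (hSmin S₂ (hS₂.symm ▸ (Finset.filter_subset _ _).trans hSA) hS₂ne hk) (by omega)
    have hsplit : S = S₁ ∪ S₂ := (Finset.filter_union_filter_not_eq (· ∈ C) S).symm
    have hbU : S.biUnion (nbr H) = S₁.biUnion (nbr H) ∪ S₂.biUnion (nbr H) := by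
      ext u
      simp only [Finset.mem_biUnion, Finset.mem_union]
      constructor
      · rintro ⟨x, hx, hux⟩
        by_cases hxC : x ∈ C
        · exact Or.inl ⟨x, Finset.mem_filter.mpr ⟨hx, hxC⟩, hux⟩
        · exact Or.inr ⟨x, Finset.mem_filter.mpr ⟨hx, hxC⟩, hux⟩
      · rintro (⟨x, hx, hux⟩ | ⟨x, hx, hux⟩)
        · exact ⟨x, (Finset.mem_filter.mp hx).1, hux⟩
        · exact ⟨x, (Finset.mem_filter.mp hx).1, hux⟩
    have hdisjbU : Disjoint (S₁.biUnion (nbr H)) (S₂.biUnion (nbr H)) := by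
      rw [Finset.disjoint_left]
      intro u hu1 hu2
      obtain ⟨x1, hx1, hux1⟩ := Finset.mem_biUnion.mp hu1
      obtain ⟨x2, hx2, hux2⟩ := Finset.mem_biUnion.mp hu2
      have h1 : u ∈ C := hCcl x1 u (mem_nbr.mp hux1) (Finset.mem_filter.mp hx1).2
      have h2 : x2 ∈ C := hCcl' x2 u (mem_nbr.mp hux2) h1
      exact (Finset.mem_filter.mp hx2).2 h2
    have hdisjS : Disjoint S₁ S₂ := by
      rw [Finset.disjoint_left]
      intro u hu1 hu2
      exact (Finset.mem_filter.mp hu2).2 (Finset.mem_filter.mp hu1).2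
    have : S.card ≤ (S.biUnion (nbr H)).card := by
      rw [hbU, Finset.card_union_of_disjoint hdisjbU, hsplit,
        Finset.card_union_of_disjoint hdisjS]
      omega
    omega
  -- no matching of H can saturate S
  have hSnosat : ∀ M : Finset (Sym2 V), IsMatchingSet H M → (∀ s ∈ S, satV M s) → False := by
    intro M hM hsat
    have hchoice : ∀ s : V, ∃ p, s ∈ S → s(s, p) ∈ M ∧ H.Adj s p := by
      intro s
      by_cases hs : s ∈ S
      · obtain ⟨p, hp1, hp2⟩ := exists_partner hM (hsat s hs)
        exact ⟨p, fun _ => ⟨hp1, hp2⟩⟩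
      · exact ⟨s, fun h => absurd h hs⟩
    choose f hf using hchoice
    have hinj : ∀ s1 ∈ S, ∀ s2 ∈ S, f s1 = f s2 → s1 = s2 := by
      intro s1 h1 s2 h2 hff
      have e1 := (hf s1 h1).1
      have e2 := (hf s2 h2).1
      rw [hff] at e1
      have := partner_unique hM e1 e2 (Sym2.mem_mk_right _ _) (Sym2.mem_mk_right _ _)
      exact Sym2.congr_left.mp this
    have : S.card ≤ (S.biUnion (nbr H)).card := by
      apply Finset.card_le_card_of_injOn f
      · intro s hs
        exact Finset.mem_biUnion.mpr ⟨s, hs, mem_nbr.mpr (hf s hs).2⟩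
      · intro s1 h1 s2 h2 hff
        exact hinj s1 h1 s2 h2 hff
    omega
  -- the component piece
  set KC : SimpleGraph V := restr H C with hKCdef
  have hbipKC : ∀ a b : V, KC.Adj a b → (a ∈ A ∧ b ∈ B) ∨ (a ∈ B ∧ b ∈ A) :=
    fun a b hab => hbipH a b hab.1
  have hKCmatch_H : ∀ {M}, IsMatchingSet KC M → IsMatchingSet H M := fun {M} => matching_restr_le
  -- equimatchability of KC
  have hCiff : ∀ u v : V, H.Adj u v → (u ∈ C ↔ v ∈ C) :=
    fun u v hadj => ⟨hCcl u v hadj, hCcl' u v hadj⟩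
  have hequiKC : Equimatchable KC := by
    intro M₁ M₂ h1 h2
    obtain ⟨M₀, hM₀⟩ := exists_maximalMatching (restr H Cᶜ)
    obtain ⟨hu1, hd1⟩ := union_maximalMatching hCiff h1 hM₀
    obtain ⟨hu2, hd2⟩ := union_maximalMatching hCiff h2 hM₀
    have := wed_equi hwedH (M₁ ∪ M₀) (M₂ ∪ M₀) hu1 hu2
    rw [Finset.card_union_of_disjoint hd1, Finset.card_union_of_disjoint hd2] at this
    omega
  -- reachability within KC
  have hreachKC : ∀ u v : V, u ∈ KC.support → v ∈ KC.support → KC.Reachable u v := by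
    have hliftw : ∀ {u v : V}, H.Walk u v → u ∈ C → KC.Reachable u v := by
      intro u v p
      induction p with
      | nil => intro _; exact SimpleGraph.Reachable.refl _
      | @cons x y z hadj q ih =>
        intro hx
        have hy : y ∈ C := hCcl x y hadj hx
        exact SimpleGraph.Reachable.trans ⟨(SimpleGraph.Adj.toWalk ⟨hadj, hx, hy⟩)⟩ (ih hy)
    intro u v hu hv
    obtain ⟨u', hu'⟩ := hu
    obtain ⟨v', hv'⟩ := hv
    have huC : u ∈ C := hu'.2.1
    have hvC : v ∈ C := hv'.2.1
    have h1 : H.Reachable s₀ u := huC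
    have h2 : H.Reachable s₀ v := hvC
    have r1 : KC.Reachable s₀ u := hliftw h1.some hs₀C
    have r2 : KC.Reachable s₀ v := hliftw h2.some hs₀C
    exact r1.symm.trans r2
  -- every vertex of C other than s₀ is in the support of KC, and C-vertices of S too
  have hsuppKC : ∀ v ∈ C, v ≠ s₀ → v ∈ KC.support := by
    intro v hv hne
    have : v ∈ H.support := mem_support_of_reachable ((hv : H.Reachable s₀ v)).symm hne
    obtain ⟨u, hu⟩ := this
    exact ⟨u, hu, hv, hCcl v u hu hv⟩
  -- get the matching M_C with the four properties
  obtain ⟨MC, hMC_match, hMC_dom, hMC_lt, hMC_ge⟩ :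
      ∃ MC : Finset (Sym2 V), IsMatchingSet KC MC ∧
        (∀ p q : V, H.Adj p q → p ∈ C → (satV MC p ∨ satV MC q)) ∧
        (MC.card + 1 ≤ (A.filter (· ∈ C)).card) ∧
        ((B.filter (· ∈ C)).card ≤ MC.card) := by
    by_cases hiso : ∀ s ∈ S, s ∈ H.support
    · -- all of S in support; use LPP on KC
      obtain ⟨M₀C, hM₀C⟩ := exists_maximalMatching KC
      have hSsuppKC : ∀ s ∈ S, s ∈ KC.support := by
        intro s hs
        obtain ⟨u, hu⟩ := hiso s hs
        exact ⟨u, hu, hSC s hs, hCcl s u hu (hSC s hs)⟩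
      rcases LPP hd hbipKC hreachKC hequiKC hM₀C with hbranch | hbranch
      · exact absurd (fun s hs => hbranch s (hSA hs) (hSsuppKC s hs))
          (fun hh => hSnosat M₀C (hKCmatch_H hM₀C.1) hh)
      · -- B branch
        refine ⟨M₀C, hM₀C.1, ?_, ?_, ?_⟩
        · intro p q hadj hp
          have hq : q ∈ C := hCcl p q hadj hp
          have hKCedge : KC.Adj p q := ⟨hadj, hp, hq⟩
          have hps : p ∈ KC.support := ⟨q, hKCedge⟩
          have hqs : q ∈ KC.support := ⟨p, hKCedge.symm⟩
          rcases hbipH p q hadj with ⟨h1, h2⟩ | ⟨h1, h2⟩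
          · exact Or.inr (hbranch q h2 hqs)
          · exact Or.inl (hbranch p h1 hps)
        · -- strict card bound
          have hchoice : ∀ e : Sym2 V, ∃ a, e ∈ M₀C → a ∈ A.filter (· ∈ C) ∧ a ∈ e := by
            intro e
            by_cases he : e ∈ M₀C
            · obtain ⟨a, b, hab, rfl⟩ := edge_repr (hM₀C.1.1 he)
              rcases edge_Aendpoint hd hbipKC hab with ⟨h1, h2⟩ | ⟨h1, h2⟩
              · exact ⟨a, fun _ => ⟨Finset.mem_filter.mpr ⟨h1, hab.2.1⟩, Sym2.mem_mk_left a b⟩⟩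
              · exact ⟨b, fun _ => ⟨Finset.mem_filter.mpr ⟨h1, hab.2.2⟩, Sym2.mem_mk_right a b⟩⟩
            · exact ⟨s₀, fun h => absurd h he⟩
          choose g hg using hchoice
          have hginj : ∀ e1 ∈ M₀C, ∀ e2 ∈ M₀C, g e1 = g e2 → e1 = e2 := by
            intro e1 h1 e2 h2 hgg
            exact partner_unique hM₀C.1 h1 h2 (hg e1 h1).2 (hgg ▸ (hg e2 h2).2)
          have hle : M₀C.card ≤ (A.filter (· ∈ C)).card :=
            Finset.card_le_card_of_injOn g (fun e he => (hg e he).1) hginj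
          rcases Nat.lt_or_ge M₀C.card (A.filter (· ∈ C)).card with h | h
          · omega
          · -- equality: image is everything, so S is saturated: contradiction
            exfalso
            have heq : M₀C.card = (A.filter (· ∈ C)).card := by omega
            have himg : M₀C.image (fun e => g e) = A.filter (· ∈ C) := by
              apply Finset.eq_of_subset_of_card_le
              · intro a ha
                obtain ⟨e, he, rfl⟩ := Finset.mem_image.mp ha
                exact (hg e he).1
              · rw [Finset.card_image_of_injOn (fun e he f hf hgg =>
                  hginj e (Finset.mem_coe.mp he) f (Finset.mem_coe.mp hf) hgg)]
                omega
            have hSsat : ∀ s ∈ S, satV M₀C s := by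
              intro s hs
              have hsmem : s ∈ A.filter (· ∈ C) := Finset.mem_filter.mpr ⟨hSA hs, hSC s hs⟩
              rw [← himg] at hsmem
              obtain ⟨e, he, hge⟩ := Finset.mem_image.mp hsmem
              exact ⟨e, he, hge ▸ (hg e he).2⟩
            exact hSnosat M₀C (hKCmatch_H hM₀C.1) hSsat
        · -- B∩C at most card
          have hchoice : ∀ b : V, ∃ e, b ∈ B.filter (· ∈ C) → e ∈ M₀C ∧ b ∈ e := by
            intro b
            by_cases hb : b ∈ B.filter (· ∈ C)
            · have hbB := (Finset.mem_filter.mp hb).1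
              have hbC := (Finset.mem_filter.mp hb).2
              have hbne : b ≠ s₀ := fun hh => Finset.disjoint_left.mp hd hs₀A (hh ▸ hbB)
              have hbs : b ∈ KC.support := hsuppKC b hbC hbne
              obtain ⟨e, he, hbe⟩ := hbranch b hbB hbs
              exact ⟨e, fun _ => ⟨he, hbe⟩⟩
            · exact ⟨s(s₀, s₀), fun h => absurd h hb⟩
          choose g hg using hchoice
          apply Finset.card_le_card_of_injOn g (fun b hb => (hg b hb).1)
          intro b1 h1 b2 h2 hgg
          simp only [Finset.mem_coe] at h1 h2
          have e1 := hg b1 h1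
          have e2 := hg b2 h2
          rw [hgg] at e1
          -- b1, b2 both in edge g b2, both in B: must be equal
          by_contra hne
          obtain ⟨x, y, hxy, hrep⟩ := edge_repr (hM₀C.1.1 e2.1)
          rw [hrep] at e1 e2
          have hb1B := (Finset.mem_filter.mp h1).1
          have hb2B := (Finset.mem_filter.mp h2).1
          have hxA : (x ∈ A ∧ y ∈ B) ∨ (x ∈ B ∧ y ∈ A) := hbipKC x y hxy
          rcases Sym2.mem_iff.mp e1.2 with h1' | h1' <;>
            rcases Sym2.mem_iff.mp e2.2 with h2' | h2'
          · exact hne (h1'.trans h2'.symm)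
          · rcases hxA with ⟨ha, hb⟩ | ⟨ha, hb⟩
            · exact Finset.disjoint_left.mp hd (h1'.symm ▸ ha) hb1B
            · exact Finset.disjoint_left.mp hd (h2'.symm ▸ hb) hb2B
          · rcases hxA with ⟨ha, hb⟩ | ⟨ha, hb⟩
            · exact Finset.disjoint_left.mp hd (h2'.symm ▸ ha) hb2B
            · exact Finset.disjoint_left.mp hd (h1'.symm ▸ hb) hb1B
          · exact hne (h1'.trans h2'.symm)
    · -- some s ∈ S isolated in H: then S = {s} and C = {s₀}
      push_neg at hiso
      obtain ⟨s₁, hs₁S, hs₁iso⟩ := hiso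
      have hnbr : nbr H s₁ = ∅ := by
        rw [Finset.eq_empty_iff_forall_notMem]
        intro u hu
        exact hs₁iso ⟨u, mem_nbr.mp hu⟩
      have hSsing : S = {s₁} := by
        have h1 : ({s₁} : Finset V).biUnion (nbr H) = ∅ := by simp [hnbr]
        have hviol : (({s₁} : Finset V).biUnion (nbr H)).card < ({s₁} : Finset V).card := by
          rw [h1]; simp
        have := hSmin {s₁} (by simpa using hSA hs₁S) ⟨s₁, by simp⟩ hviol
        have hsub : {s₁} ⊆ S := by simpa using hs₁S
        exact (Finset.eq_of_subset_of_card_le hsub (by simpa using this)).symm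
      have hs₀eq : s₀ = s₁ := by
        have := hs₀S
        rw [hSsing] at this
        simpa using this
      subst hs₀eq
      have hCsing : ∀ v ∈ C, v = s₀ := by
        intro v hv
        by_contra hne
        have : s₀ ∈ H.support := mem_support_of_reachable (hv : H.Reachable s₀ v)
          (fun hh => hne hh.symm)
        exact hs₁iso this
      refine ⟨∅, matching_empty KC, ?_, ?_, ?_⟩
      · intro p q hadj hp
        have := hCsing p hp
        subst this
        exact absurd ⟨q, hadj⟩ hs₁iso
      · have : s₀ ∈ A.filter (· ∈ C) := Finset.mem_filter.mpr ⟨hs₀A, hs₀C⟩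
        have := Finset.card_pos.mpr ⟨s₀, this⟩
        simpa using this
      · have : B.filter (· ∈ C) = ∅ := by
          rw [Finset.eq_empty_iff_forall_notMem]
          intro b hb
          have h1 := (Finset.mem_filter.mp hb).1
          have h2 := hCsing b (Finset.mem_filter.mp hb).2
          exact Finset.disjoint_left.mp hd hs₀A (h2 ▸ h1)
        simp [this]
  -- final case analysis on the neighbours of w
  by_cases hNw : ∀ u : V, G'.Adj w u → u ∈ C
  · -- all neighbours of w in C: the whole graph is C ∪ {w}, contradicting |A| < |B|
    have hall : ∀ v : V, v ∈ C ∨ v = w := by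
      have hstep : ∀ {u v : V} (_ : G'.Walk u v), (u ∈ C ∨ u = w) → (v ∈ C ∨ v = w) := by
        intro u v p
        induction p with
        | nil => exact id
        | @cons x y z hadj q ih =>
          intro hx
          apply ih
          rcases hx with hxC | hxw
          · by_cases hyw : y = w
            · exact Or.inr hyw
            · have hxw : x ≠ w := fun hh => hwC (hh ▸ hxC)
              exact Or.inl (hCcl x y ⟨hadj, hxw, hyw⟩ hxC)
          · subst hxw
            exact Or.inl (hNw y hadj)
      intro v
      exact hstep ((hconn.preconnected w v).some) (Or.inr rfl)
    have hBsub : B ⊆ insert w (B.filter (· ∈ C)) := by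
      intro b hb
      rcases hall b with h | h
      · exact Finset.mem_insert_of_mem (Finset.mem_filter.mpr ⟨hb, h⟩)
      · exact h ▸ Finset.mem_insert_self _ _
    have h1 : B.card ≤ (B.filter (· ∈ C)).card + 1 :=
      le_trans (Finset.card_le_card hBsub) (Finset.card_insert_le _ _)
    have h2 : (A.filter (· ∈ C)).card ≤ A.card :=
      Finset.card_le_card (Finset.filter_subset _ _)
    omega
  · -- w has a neighbour u'' outside C: build a too-small maximal matching of G'
    push_neg at hNw
    obtain ⟨u'', hadjwu, hu''C⟩ := hNw
    have hu''A : u'' ∈ A := by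
      rcases hbip w u'' hadjwu with ⟨h1, h2⟩ | ⟨h1, h2⟩
      · exact absurd h1 (Finset.disjoint_right.mp hd hw)
      · exact h2
    have hu''w : u'' ≠ w := fun hh => G'.irrefl (hh ▸ hadjwu)
    set P0 : Set V := {v | v ∉ C ∧ v ≠ w ∧ v ≠ u''} with hP0def
    obtain ⟨M0, hM0⟩ := exists_maximalMatching (restr G' P0)
    have hMCverts : ∀ e ∈ MC, ∀ v ∈ e, v ∈ C := restr_verts hMC_match.1
    have hM0verts : ∀ e ∈ M0, ∀ v ∈ e, v ∈ P0 := restr_verts hM0.1.1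
    have hnew_notin : s(w, u'') ∉ MC ∪ M0 := by
      intro hh
      rcases Finset.mem_union.mp hh with h | h
      · exact hwC (hMCverts _ h w (Sym2.mem_mk_left w u''))
      · exact (hM0verts _ h w (Sym2.mem_mk_left w u'')).2.1 rfl
    have hdisj0 : Disjoint MC M0 := by
      rw [Finset.disjoint_left]
      intro e h1 h2
      obtain ⟨a, b, hab, rfl⟩ := edge_repr (hMC_match.1 h1)
      exact (hM0verts _ h2 a (Sym2.mem_mk_left a b)).1 (hMCverts _ h1 a (Sym2.mem_mk_left a b))
    set Mstar : Finset (Sym2 V) := insert s(w, u'') (MC ∪ M0) with hMstardef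
    have hMstar_match : IsMatchingSet G' Mstar := by
      constructor
      · intro e he
        rcases Finset.mem_insert.mp (Finset.mem_coe.mp he) with heq | hmem
        · subst heq
          exact (SimpleGraph.mem_edgeSet _).mpr hadjwu
        · rcases Finset.mem_union.mp hmem with h | h
          · exact restr_edge_le (restr_edge_le (hMC_match.1 h))
          · exact restr_edge_le (hM0.1.1 h)
      · intro e he f hf hef v hv
        have keyMC : ∀ g ∈ MC, ∀ x, x ∈ s(w, u'') → x ∉ g := by
          intro g hg x hx hxg
          rcases Sym2.mem_iff.mp hx with h' | h' <;> rw [h'] at hxg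
          · exact hwC (hMCverts _ hg w hxg)
          · exact hu''C (hMCverts _ hg u'' hxg)
        have keyM0 : ∀ g ∈ M0, ∀ x, x ∈ s(w, u'') → x ∉ g := by
          intro g hg x hx hxg
          rcases Sym2.mem_iff.mp hx with h' | h' <;> rw [h'] at hxg
          · exact (hM0verts _ hg w hxg).2.1 rfl
          · exact (hM0verts _ hg u'' hxg).2.2 rfl
        have keyU : ∀ g ∈ MC ∪ M0, ∀ x, x ∈ s(w, u'') → x ∉ g := by
          intro g hg
          rcases Finset.mem_union.mp hg with h | h
          · exact keyMC g h
          · exact keyM0 g h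
        rcases Finset.mem_insert.mp he with heq | hmem
        · rcases Finset.mem_insert.mp hf with hfq | hfmem
          · exact hef (heq.trans hfq.symm)
          · subst heq
            exact keyU f hfmem v hv.1 hv.2
        · rcases Finset.mem_insert.mp hf with hfq | hfmem
          · subst hfq
            exact keyU e hmem v hv.2 hv.1
          · rcases Finset.mem_union.mp hmem with h1 | h1 <;>
              rcases Finset.mem_union.mp hfmem with h2 | h2
            · exact hMC_match.2 e h1 f h2 hef v hv
            · exact (hM0verts f h2 v hv.2).1 (hMCverts e h1 v hv.1)
            · exact (hM0verts e h1 v hv.1).1 (hMCverts f h2 v hv.2)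
            · exact hM0.1.2 e h1 f h2 hef v hv
    have hMstar_max : IsMaximalMatching G' Mstar := by
      refine ⟨hMstar_match, ?_⟩
      intro e he
      obtain ⟨p, q, hpq, rfl⟩ := edge_repr he
      have hmemstar : ∀ x : V, satV (MC ∪ M0) x → ∃ f ∈ Mstar, ∃ v : V, v ∈ s(p, q) ∧ v ∈ f →
          True := fun _ _ => ⟨s(w, u''), Finset.mem_insert_self _ _, p, fun _ => trivial⟩
      by_cases hpw : p = w
      · exact ⟨s(w, u''), Finset.mem_insert_self _ _, w,
          by rw [← hpw]; exact Sym2.mem_mk_left p q, Sym2.mem_mk_left w u''⟩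
      by_cases hqw : q = w
      · exact ⟨s(w, u''), Finset.mem_insert_self _ _, w,
          by rw [← hqw]; exact Sym2.mem_mk_right p q, Sym2.mem_mk_left w u''⟩
      by_cases hpu : p = u''
      · exact ⟨s(w, u''), Finset.mem_insert_self _ _, u'',
          by rw [← hpu]; exact Sym2.mem_mk_left p q, Sym2.mem_mk_right w u''⟩
      by_cases hqu : q = u''
      · exact ⟨s(w, u''), Finset.mem_insert_self _ _, u'',
          by rw [← hqu]; exact Sym2.mem_mk_right p q, Sym2.mem_mk_right w u''⟩
      have hHadj : H.Adj p q := ⟨hpq, hpw, hqw⟩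
      by_cases hpC : p ∈ C
      · rcases hMC_dom p q hHadj hpC with ⟨f, hf, hvf⟩ | ⟨f, hf, hvf⟩
        · exact ⟨f, Finset.mem_insert_of_mem (Finset.mem_union_left _ hf), p,
            Sym2.mem_mk_left p q, hvf⟩
        · exact ⟨f, Finset.mem_insert_of_mem (Finset.mem_union_left _ hf), q,
            Sym2.mem_mk_right p q, hvf⟩
      by_cases hqC : q ∈ C
      · rcases hMC_dom q p hHadj.symm hqC with ⟨f, hf, hvf⟩ | ⟨f, hf, hvf⟩
        · exact ⟨f, Finset.mem_insert_of_mem (Finset.mem_union_left _ hf), q,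
            Sym2.mem_mk_right p q, hvf⟩
        · exact ⟨f, Finset.mem_insert_of_mem (Finset.mem_union_left _ hf), p,
            Sym2.mem_mk_left p q, hvf⟩
      · have hP0adj : (restr G' P0).Adj p q := ⟨hpq, ⟨hpC, hpw, hpu⟩, ⟨hqC, hqw, hqu⟩⟩
        obtain ⟨f, hf, v, hv1, hv2⟩ := hM0.2 s(p, q) ((SimpleGraph.mem_edgeSet _).mpr hP0adj)
        exact ⟨f, Finset.mem_insert_of_mem (Finset.mem_union_right _ hf), v, hv1, hv2⟩
    -- cardinality bound
    have hM0card : M0.card ≤ ((A.filter (fun v => v ∉ C)).erase u'').card := by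
      have hchoice : ∀ e : Sym2 V, ∃ a, e ∈ M0 →
          a ∈ (A.filter (fun v => v ∉ C)).erase u'' ∧ a ∈ e := by
        intro e
        by_cases he : e ∈ M0
        · obtain ⟨a, b, hab, hrep⟩ := edge_repr (hM0.1.1 he)
          have hPa : a ∈ P0 := hM0verts e he a (hrep ▸ Sym2.mem_mk_left a b)
          have hPb : b ∈ P0 := hM0verts e he b (hrep ▸ Sym2.mem_mk_right a b)
          rcases edge_Aendpoint (G := restr G' P0) hd (fun x y hxy => hbip x y hxy.1) hab with ⟨h1, h2⟩ | ⟨h1, h2⟩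
          · exact ⟨a, fun _ => ⟨Finset.mem_erase.mpr ⟨hPa.2.2,
              Finset.mem_filter.mpr ⟨h1, hPa.1⟩⟩, hrep ▸ Sym2.mem_mk_left a b⟩⟩
          · exact ⟨b, fun _ => ⟨Finset.mem_erase.mpr ⟨hPb.2.2,
              Finset.mem_filter.mpr ⟨h1, hPb.1⟩⟩, hrep ▸ Sym2.mem_mk_right a b⟩⟩
        · exact ⟨w, fun h => absurd h he⟩
      choose g hg using hchoice
      apply Finset.card_le_card_of_injOn g (fun e he => (hg e he).1)
      intro e1 h1 e2 h2 hgg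
      exact partner_unique hM0.1 (Finset.mem_coe.mp h1) (Finset.mem_coe.mp h2)
        (hg e1 (Finset.mem_coe.mp h1)).2 (hgg ▸ (hg e2 (Finset.mem_coe.mp h2)).2)
    have hu''mem : u'' ∈ A.filter (fun v => v ∉ C) := Finset.mem_filter.mpr ⟨hu''A, hu''C⟩
    have herase : ((A.filter (fun v => v ∉ C)).erase u'').card =
        (A.filter (fun v => v ∉ C)).card - 1 := Finset.card_erase_of_mem hu''mem
    have hpos : 1 ≤ (A.filter (fun v => v ∉ C)).card := Finset.card_pos.mpr ⟨u'', hu''mem⟩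
    have hAsplit : (A.filter (· ∈ C)).card + (A.filter (fun v => v ∉ C)).card = A.card :=
      Finset.card_filter_add_card_filter_not (fun v => (v ∈ C))
    have hstarcard : Mstar.card = MC.card + M0.card + 1 := by
      rw [hMstardef, Finset.card_insert_of_notMem hnew_notin,
        Finset.card_union_of_disjoint hdisj0]
    have := hkG Mstar hMstar_max
    omega


/-! ### the triangle-attachment graph -/

section Attach

variable {G' : SimpleGraph V} {w : V}

lemma attach_adj_inl_inl {u v : V} :
    (attachTriangle G' w).Adj (Sum.inl u) (Sum.inl v) ↔ G'.Adj u v := by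
  rw [attachTriangle, SimpleGraph.fromRel_adj]
  constructor
  · rintro ⟨hne, h | h⟩
    · exact h
    · exact h.symm
  · intro h
    exact ⟨by simp [h.ne], Or.inl h⟩

lemma attach_adj_inl_inr {u : V} {i : Fin 2} :
    (attachTriangle G' w).Adj (Sum.inl u) (Sum.inr i) ↔ u = w := by
  rw [attachTriangle, SimpleGraph.fromRel_adj]
  constructor
  · rintro ⟨hne, h | h⟩
    · exact h
    · exact h
  · intro h
    exact ⟨by simp, Or.inl h⟩

lemma attach_adj_inr_inr {i j : Fin 2} :
    (attachTriangle G' w).Adj (Sum.inr i) (Sum.inr j) ↔ i ≠ j := by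
  rw [attachTriangle, SimpleGraph.fromRel_adj]
  constructor
  · rintro ⟨hne, h | h⟩ <;> exact fun hh => hne (by rw [hh])
  · intro h
    exact ⟨by simp [h], Or.inl trivial⟩

/-- triangle edges -/
def isTri (w : V) (e : Sym2 (V ⊕ Fin 2)) : Prop :=
  e = s(Sum.inl w, Sum.inr 0) ∨ e = s(Sum.inl w, Sum.inr 1) ∨ e = s(Sum.inr 0, Sum.inr 1)

lemma edge_with_inr {e : Sym2 (V ⊕ Fin 2)} (he : e ∈ (attachTriangle G' w).edgeSet)
    {i : Fin 2} (hi : Sum.inr i ∈ e) : isTri w e := by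
  obtain ⟨p, q, hpq, rfl⟩ := edge_repr he
  cases p with
  | inl a =>
    cases q with
    | inl b =>
      rw [Sym2.mem_iff] at hi
      rcases hi with h | h <;> exact absurd h (by simp)
    | inr j =>
      have ha : a = w := attach_adj_inl_inr.mp hpq
      subst ha
      fin_cases j
      · exact Or.inl rfl
      · exact Or.inr (Or.inl rfl)
  | inr j =>
    cases q with
    | inl b =>
      have hb : b = w := attach_adj_inl_inr.mp hpq.symm
      subst hb
      rw [Sym2.eq_swap]
      fin_cases j
      · exact Or.inl rfl
      · exact Or.inr (Or.inl rfl)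
    | inr k =>
      have hjk : j ≠ k := attach_adj_inr_inr.mp hpq
      fin_cases j <;> fin_cases k
      · exact absurd rfl hjk
      · exact Or.inr (Or.inr rfl)
      · exact Or.inr (Or.inr (Sym2.eq_swap))
      · exact absurd rfl hjk

lemma tri_dom {tk e : Sym2 (V ⊕ Fin 2)} (htk : isTri w tk) (he : isTri w e) :
    ∃ v, v ∈ e ∧ v ∈ tk := by
  rcases htk with rfl | rfl | rfl <;> rcases he with rfl | rfl | rfl
  · exact ⟨Sum.inl w, by simp, by simp⟩
  · exact ⟨Sum.inl w, by simp, by simp⟩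
  · exact ⟨Sum.inr 0, by simp, by simp⟩
  · exact ⟨Sum.inl w, by simp, by simp⟩
  · exact ⟨Sum.inl w, by simp, by simp⟩
  · exact ⟨Sum.inr 1, by simp, by simp⟩
  · exact ⟨Sum.inr 0, by simp, by simp⟩
  · exact ⟨Sum.inr 1, by simp, by simp⟩
  · exact ⟨Sum.inr 0, by simp, by simp⟩

lemma attach_edge_cases {e : Sym2 (V ⊕ Fin 2)} (he : e ∈ (attachTriangle G' w).edgeSet) :
    (∃ u v, G'.Adj u v ∧ e = s(Sum.inl u, Sum.inl v)) ∨ isTri w e := by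
  obtain ⟨p, q, hpq, rfl⟩ := edge_repr he
  cases p with
  | inl a =>
    cases q with
    | inl b => exact Or.inl ⟨a, b, attach_adj_inl_inl.mp hpq, rfl⟩
    | inr j => exact Or.inr (edge_with_inr ((SimpleGraph.mem_edgeSet _).mpr hpq)
        (Sym2.mem_mk_right _ _))
  | inr j =>
    exact Or.inr (edge_with_inr ((SimpleGraph.mem_edgeSet _).mpr hpq) (Sym2.mem_mk_left _ _))

lemma attach_edge_of_G' {g : Sym2 V} (hg : g ∈ G'.edgeSet) :
    Sym2.map Sum.inl g ∈ (attachTriangle G' w).edgeSet := by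
  obtain ⟨u, v, huv, rfl⟩ := edge_repr hg
  exact (SimpleGraph.mem_edgeSet _).mpr (attach_adj_inl_inl.mpr huv)

lemma tri_mem_edgeSet (t : Sym2 (V ⊕ Fin 2)) (ht : isTri w t) :
    t ∈ (attachTriangle G' w).edgeSet := by
  rcases ht with rfl | rfl | rfl
  · exact (SimpleGraph.mem_edgeSet _).mpr (attach_adj_inl_inr.mpr rfl)
  · exact (SimpleGraph.mem_edgeSet _).mpr (attach_adj_inl_inr.mpr rfl)
  · exact (SimpleGraph.mem_edgeSet _).mpr (attach_adj_inr_inr.mpr (by decide))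

lemma inl_mem_map_iff {u : V} {g : Sym2 V} :
    (Sum.inl u : V ⊕ Fin 2) ∈ Sym2.map Sum.inl g ↔ u ∈ g := by
  rw [Sym2.mem_map]
  constructor
  · rintro ⟨a, ha, heq⟩
    rwa [show a = u from Sum.inl_injective heq] at ha
  · intro h
    exact ⟨u, h, rfl⟩

lemma inr_not_mem_map {i : Fin 2} {g : Sym2 V} :
    (Sum.inr i : V ⊕ Fin 2) ∉ Sym2.map Sum.inl g := by
  rw [Sym2.mem_map]
  rintro ⟨a, -, heq⟩
  exact absurd heq (by simp)

lemma z_not_mem_tri₃ : (Sum.inl w : V ⊕ Fin 2) ∉ s(Sum.inr 0, Sum.inr 1) := by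
  simp

end Attach

lemma minEDS_G'_card (G' : SimpleGraph V) (A B : Finset V) (hd : Disjoint A B)
    (hbip : ∀ a b : V, G'.Adj a b → (a ∈ A ∧ b ∈ B) ∨ (a ∈ B ∧ b ∈ A))
    (hconn : G'.Connected) (hwed : WellEdgeDominated G') (hcard : A.card < B.card) :
    ∀ F, IsMinEDS G' F → F.card = A.card := by
  obtain ⟨M, hM, hsat⟩ := exists_asat_G G' A B hd hbip hconn hwed hcard
  exact minEDS_card_of_asat hd hbip hwed hM hsat

lemma minEDS_H_card (G' : SimpleGraph V) (A B : Finset V) (w : V) (hd : Disjoint A B)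
    (hbip : ∀ a b : V, G'.Adj a b → (a ∈ A ∧ b ∈ B) ∨ (a ∈ B ∧ b ∈ A))
    (hconn : G'.Connected) (hwed : WellEdgeDominated G') (hcard : A.card < B.card)
    (hw : w ∈ B) (hdet : WellEdgeDominated (G'.induce {v : V | v ≠ w})) :
    ∀ F, IsMinEDS (restr G' {v : V | v ≠ w}) F → F.card = A.card := by
  have hkG : ∀ N, IsMaximalMatching G' N → N.card = A.card := fun N hN =>
    minEDS_G'_card G' A B hd hbip hconn hwed hcard N (maximalMatching_isMinEDS hN)
  obtain ⟨M, hM, hsat⟩ := exists_asat_H G' A B w hd hbip hconn hcard hw (wed_restr hdet) hkG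
  exact minEDS_card_of_asat hd (fun a b hab => hbip a b hab.1) (wed_restr hdet) hM hsat

/-- the projection back to `V` -/
def piw (w : V) : V ⊕ Fin 2 → V := Sum.elim id (fun _ => w)

lemma inl_mem_pair_iff {u a b : V} :
    (Sum.inl u : V ⊕ Fin 2) ∈ s(Sum.inl a, Sum.inl b) ↔ u = a ∨ u = b := by
  rw [Sym2.mem_iff]
  constructor
  · rintro (h | h)
    · exact Or.inl (Sum.inl_injective h)
    · exact Or.inr (Sum.inl_injective h)
  · rintro (rfl | rfl)
    · exact Or.inl rfl
    · exact Or.inr rfl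

end AW


/-- If `G'` is a connected well-edge-dominated bipartite graph with bipartition `A ∪ B`,
`|A| < |B|`, and `w ∈ B` is detachable (`G' - w` is well-edge-dominated), then every
minimal edge dominating set of the graph obtained by gluing a triangle at `w` has
cardinality `|A| + 1`; in particular that graph is well-edge-dominated. -/
theorem attachTriangle_minEDS_card {W : Type*} [Fintype W] [DecidableEq W]
    (G' : SimpleGraph W) (A B : Finset W)
    (hdisj : Disjoint A B) (hcover : A ∪ B = Finset.univ)
    (hbip : ∀ a b : W, G'.Adj a b → (a ∈ A ∧ b ∈ B) ∨ (a ∈ B ∧ b ∈ A))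
    (hconn : G'.Connected) (hwed : WellEdgeDominated G')
    (hcard : A.card < B.card)
    (w : W) (hw : w ∈ B)
    (hdet : WellEdgeDominated (G'.induce {v : W | v ≠ w})) :
    (∀ F : Finset (Sym2 (W ⊕ Fin 2)), IsMinEDS (attachTriangle G' w) F →
      F.card = A.card + 1) ∧ WellEdgeDominated (attachTriangle G' w) := by
  classical
  have hkG' : ∀ F, IsMinEDS G' F → F.card = A.card :=
    AW.minEDS_G'_card G' A B hdisj hbip hconn hwed hcard
  have hkH : ∀ F, IsMinEDS (AW.restr G' {v : W | v ≠ w}) F → F.card = A.card :=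
    AW.minEDS_H_card G' A B w hdisj hbip hconn hwed hcard hw hdet
  have main : ∀ F : Finset (Sym2 (W ⊕ Fin 2)), IsMinEDS (attachTriangle G' w) F →
      F.card = A.card + 1 := by
    intro F hF
    have hFedge : ↑F ⊆ (attachTriangle G' w).edgeSet := hF.1.1
    -- Step 1: F contains a triangle edge
    have hxyedge : s(Sum.inr 0, Sum.inr 1) ∈ (attachTriangle G' w).edgeSet :=
      AW.tri_mem_edgeSet _ (Or.inr (Or.inr rfl))
    obtain ⟨t0, ht0F, v0, hv0e, hv0f⟩ := hF.1.2 _ hxyedge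
    have ht0tri : AW.isTri w t0 := by
      rcases Sym2.mem_iff.mp hv0e with rfl | rfl
      · exact AW.edge_with_inr (hFedge ht0F) hv0f
      · exact AW.edge_with_inr (hFedge ht0F) hv0f
    -- Step 2: uniqueness of the triangle edge
    have herase_eds : ∀ tk tb, tk ∈ F → tb ∈ F → AW.isTri w tk → AW.isTri w tb →
        (tk = s(Sum.inl w, Sum.inr 0) ∨ tk = s(Sum.inl w, Sum.inr 1)) → tk ≠ tb → False := by
      intro tk tb htkF htbF htktri htbtri htkz hne
      apply hF.2 (F.erase tb) (Finset.erase_ssubset htbF)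
      constructor
      · intro e he
        exact hFedge (Finset.mem_coe.mpr (Finset.mem_of_mem_erase (Finset.mem_coe.mp he)))
      · intro e he
        obtain ⟨f, hf, v, hv1, hv2⟩ := hF.1.2 e he
        by_cases hftb : f = tb
        · subst hftb
          have hvcases : v = Sum.inl w ∨ (∃ i : Fin 2, v = Sum.inr i) := by
            rcases htbtri with hb | hb | hb <;> rw [hb] at hv2 <;>
              rcases Sym2.mem_iff.mp hv2 with h | h
            · exact Or.inl h
            · exact Or.inr ⟨0, h⟩
            · exact Or.inl h
            · exact Or.inr ⟨1, h⟩
            · exact Or.inr ⟨0, h⟩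
            · exact Or.inr ⟨1, h⟩
          rcases hvcases with rfl | ⟨i, rfl⟩
          · refine ⟨tk, Finset.mem_erase_of_ne_of_mem hne htkF, Sum.inl w, hv1, ?_⟩
            rcases htkz with rfl | rfl
            · simp
            · simp
          · have hetri := AW.edge_with_inr he hv1
            obtain ⟨v', h1, h2⟩ := AW.tri_dom htktri hetri
            exact ⟨tk, Finset.mem_erase_of_ne_of_mem hne htkF, v', h1, h2⟩
        · exact ⟨f, Finset.mem_erase_of_ne_of_mem hftb hf, v, hv1, hv2⟩
    have huniq : ∀ t' ∈ F, AW.isTri w t' → t' = t0 := by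
      intro t' ht'F ht'tri
      by_contra hne
      rcases ht0tri with h0 | h0 | h0
      · exact herase_eds t0 t' ht0F ht'F (Or.inl h0) ht'tri (Or.inl h0)
          (fun hh => hne hh.symm)
      · exact herase_eds t0 t' ht0F ht'F (Or.inr (Or.inl h0)) ht'tri (Or.inr h0)
          (fun hh => hne hh.symm)
      · rcases ht'tri with h' | h' | h'
        · exact herase_eds t' t0 ht'F ht0F (Or.inl h') (Or.inr (Or.inr h0)) (Or.inl h') hne
        · exact herase_eds t' t0 ht'F ht0F (Or.inr (Or.inl h')) (Or.inr (Or.inr h0))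
            (Or.inr h') hne
        · exact hne (h'.trans h0.symm)
    -- Step 3: the rest of F consists of G'-edges
    set F' := F.erase t0 with hF'def
    have hF'G' : ∀ f ∈ F', ∃ u v, G'.Adj u v ∧ f = s(Sum.inl u, Sum.inl v) := by
      intro f hf
      rcases AW.attach_edge_cases (hFedge (Finset.mem_of_mem_erase hf)) with h | h
      · exact h
      · exact absurd (huniq f (Finset.mem_of_mem_erase hf) h) (Finset.ne_of_mem_erase hf)
    set FW := F'.image (Sym2.map (AW.piw w)) with hFWdef
    have hFWstruct : ∀ f₀ ∈ FW, ∃ u v, G'.Adj u v ∧ f₀ = s(u, v) ∧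
        s(Sum.inl u, Sum.inl v) ∈ F' := by
      intro f₀ hf₀
      obtain ⟨f, hf, rfl⟩ := Finset.mem_image.mp hf₀
      obtain ⟨u, v, huv, rfl⟩ := hF'G' f hf
      exact ⟨u, v, huv, rfl, hf⟩
    have hmemFW : ∀ u v : W, s(Sum.inl u, Sum.inl v) ∈ F' → s(u, v) ∈ FW := by
      intro u v hf
      have : Sym2.map (AW.piw w) s(Sum.inl u, Sum.inl v) = s(u, v) := rfl
      exact this ▸ Finset.mem_image_of_mem _ hf
    have himg : FW.image (Sym2.map (Sum.inl : W → W ⊕ Fin 2)) = F' := by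
      apply Finset.Subset.antisymm
      · intro e he
        obtain ⟨f₀, hf₀, rfl⟩ := Finset.mem_image.mp he
        obtain ⟨u, v, huv, rfl, hmem⟩ := hFWstruct f₀ hf₀
        exact hmem
      · intro e he
        obtain ⟨u, v, huv, rfl⟩ := hF'G' e he
        exact Finset.mem_image.mpr ⟨s(u, v), hmemFW u v he, rfl⟩
    have hcardFW : FW.card = F'.card := by
      have h1 : FW.card ≤ F'.card := hFWdef ▸ Finset.card_image_le
      have h2 : F'.card ≤ FW.card := himg ▸ Finset.card_image_le
      omega
    have hcardF : F.card = F'.card + 1 := by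
      rw [hF'def, Finset.card_erase_of_mem ht0F]
      have : 0 < F.card := Finset.card_pos.mpr ⟨t0, ht0F⟩
      omega
    -- a common tool for the minimality arguments
    have hWssub : ∀ F'' : Finset (Sym2 W), F'' ⊂ FW →
        insert t0 (F''.image (Sym2.map (Sum.inl : W → W ⊕ Fin 2))) ⊂ F := by
      intro F'' hsub
      have hsubs : insert t0 (F''.image (Sym2.map (Sum.inl : W → W ⊕ Fin 2))) ⊆ F := by
        intro e he
        rcases Finset.mem_insert.mp he with rfl | he
        · exact ht0F
        · have : e ∈ FW.image (Sym2.map (Sum.inl : W → W ⊕ Fin 2)) :=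
            Finset.image_subset_image hsub.subset he
          rw [himg] at this
          exact Finset.mem_of_mem_erase this
      have hlt : (insert t0 (F''.image (Sym2.map (Sum.inl : W → W ⊕ Fin 2)))).card < F.card := by
        have h1 : (insert t0 (F''.image (Sym2.map (Sum.inl : W → W ⊕ Fin 2)))).card ≤
            (F''.image (Sym2.map (Sum.inl : W → W ⊕ Fin 2))).card + 1 := Finset.card_insert_le _ _
        have h2 : (F''.image (Sym2.map (Sum.inl : W → W ⊕ Fin 2))).card ≤ F''.card := Finset.card_image_le
        have h3 : F''.card < FW.card := Finset.card_lt_card hsub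
        omega
      exact Finset.ssubset_iff_subset_ne.mpr ⟨hsubs, fun hh => by rw [hh] at hlt; omega⟩
    -- case analysis on the triangle edge
    have hzcase : (Sum.inl w ∈ t0 ∧ (∀ u' : W, Sum.inl u' ∈ t0 → u' = w)) ∨
        t0 = s(Sum.inr 0, Sum.inr 1) := by
      rcases ht0tri with h | h | h
      · subst h
        refine Or.inl ⟨by simp, ?_⟩
        intro u' hu'
        rcases Sym2.mem_iff.mp hu' with h | h
        · exact Sum.inl_injective h
        · exact absurd h (by simp)
      · subst h
        refine Or.inl ⟨by simp, ?_⟩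
        intro u' hu'
        rcases Sym2.mem_iff.mp hu' with h | h
        · exact Sum.inl_injective h
        · exact absurd h (by simp)
      · exact Or.inr h
    -- domination of G-edges by the candidate replacement sets
    have hWdom : ∀ F'' : Finset (Sym2 W), (↑F'' ⊆ G'.edgeSet) →
        (∀ g ∈ G'.edgeSet, (w ∉ g) → ∃ f ∈ F'', ∃ v : W, v ∈ g ∧ v ∈ f) →
        (∀ g ∈ G'.edgeSet, w ∈ g → (Sum.inl w : W ⊕ Fin 2) ∈ t0 ∨
          ∃ f ∈ F'', ∃ v : W, v ∈ g ∧ v ∈ f) →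
        IsEDS (attachTriangle G' w) (insert t0 (F''.image (Sym2.map (Sum.inl : W → W ⊕ Fin 2)))) := by
      intro F'' hsub hdom1 hdom2
      constructor
      · intro e he
        rcases Finset.mem_insert.mp (Finset.mem_coe.mp he) with rfl | he
        · exact AW.tri_mem_edgeSet _ ht0tri
        · obtain ⟨g, hg, rfl⟩ := Finset.mem_image.mp he
          exact AW.attach_edge_of_G' (hsub hg)
      · intro e he
        rcases AW.attach_edge_cases he with ⟨u, v, huv, rfl⟩ | htri
        · -- a G'-edge
          by_cases hwin : w ∈ s(u, v)
          · rcases hdom2 s(u, v) ((SimpleGraph.mem_edgeSet _).mpr huv) hwin with hz | hffound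
            · refine ⟨t0, Finset.mem_insert_self _ _, Sum.inl w, ?_, hz⟩
              rcases Sym2.mem_iff.mp hwin with rfl | rfl
              · exact Sym2.mem_mk_left _ _
              · exact Sym2.mem_mk_right _ _
            · obtain ⟨f, hf, v', h1, h2⟩ := hffound
              refine ⟨Sym2.map Sum.inl f, Finset.mem_insert_of_mem
                (Finset.mem_image_of_mem _ hf), Sum.inl v', ?_, AW.inl_mem_map_iff.mpr h2⟩
              rcases Sym2.mem_iff.mp h1 with rfl | rfl
              · exact Sym2.mem_mk_left _ _
              · exact Sym2.mem_mk_right _ _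
          · obtain ⟨f, hf, v', h1, h2⟩ :=
              hdom1 s(u, v) ((SimpleGraph.mem_edgeSet _).mpr huv) hwin
            refine ⟨Sym2.map Sum.inl f, Finset.mem_insert_of_mem
              (Finset.mem_image_of_mem _ hf), Sum.inl v', ?_, AW.inl_mem_map_iff.mpr h2⟩
            rcases Sym2.mem_iff.mp h1 with rfl | rfl
            · exact Sym2.mem_mk_left _ _
            · exact Sym2.mem_mk_right _ _
        · obtain ⟨v', h1, h2⟩ := AW.tri_dom ht0tri htri
          exact ⟨t0, Finset.mem_insert_self _ _, v', h1, h2⟩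
    -- domination down: F' (through FW) dominates suitable G'-edges
    have hdomdown : ∀ g ∈ G'.edgeSet, (∃ f ∈ F, f ≠ t0 ∧ ∃ u' : W, Sum.inl u' ∈ f ∧ u' ∈ g) →
        ∃ f₀ ∈ FW, ∃ v : W, v ∈ g ∧ v ∈ f₀ := by
      intro g hg ⟨f, hfF, hfne, u', hu'f, hu'g⟩
      have hfF' : f ∈ F' := Finset.mem_erase_of_ne_of_mem hfne hfF
      obtain ⟨a, b, hab, rfl⟩ := hF'G' f hfF'
      have : u' = a ∨ u' = b := AW.inl_mem_pair_iff.mp hu'f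
      refine ⟨s(a, b), hmemFW a b hfF', u', hu'g, ?_⟩
      rcases this with rfl | rfl
      · exact Sym2.mem_mk_left _ _
      · exact Sym2.mem_mk_right _ _
    have hdomF : ∀ g ∈ G'.edgeSet, ∃ f ∈ F, ∃ vv, vv ∈ Sym2.map Sum.inl g ∧ vv ∈ f := by
      intro g hg
      exact hF.1.2 _ (AW.attach_edge_of_G' hg)
    rcases hzcase with ⟨hzt0, hinlt0⟩ | ht0xy
    · -- t0 is a z-edge
      by_cases hwF' : ∃ f ∈ F', (Sum.inl w : W ⊕ Fin 2) ∈ f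
      · -- Case B1: FW is a minimal EDS of G'
        have hFWmin : IsMinEDS G' FW := by
          constructor
          constructor
          · intro f₀ hf₀
            obtain ⟨u, v, huv, rfl, -⟩ := hFWstruct f₀ hf₀
            exact (SimpleGraph.mem_edgeSet _).mpr huv
          · intro g hg
            obtain ⟨f, hfF, vv, hvv1, hvv2⟩ := hdomF g hg
            obtain ⟨u', hu'⟩ := Sym2.mem_map.mp hvv1
            by_cases hft0 : f = t0
            · subst hft0
              have hu'w : u' = w := hinlt0 u' (hu'.2 ▸ hvv2)
              have hwg : w ∈ g := by rw [← hu'w]; exact hu'.1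
              obtain ⟨fw, hfwF', hfww⟩ := hwF'
              obtain ⟨a, b, hab, rfl⟩ := hF'G' fw hfwF'
              have : w = a ∨ w = b := AW.inl_mem_pair_iff.mp hfww
              refine ⟨s(a, b), hmemFW a b hfwF', w, hwg, ?_⟩
              rcases this with h | h
              · rw [h]; exact Sym2.mem_mk_left _ _
              · rw [h]; exact Sym2.mem_mk_right _ _
            · exact hdomdown g hg ⟨f, hfF, hft0, u', hu'.2 ▸ hvv2, hu'.1⟩
          · intro F'' hsub heds
            apply hF.2 _ (hWssub F'' hsub)
            apply hWdom F'' heds.1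
            · intro g hg hwg
              obtain ⟨f, hf, v, h1, h2⟩ := heds.2 g hg
              exact ⟨f, hf, v, h1, h2⟩
            · intro g hg hwg
              exact Or.inl hzt0
        have := hkG' FW hFWmin
        omega
      · -- Case B2: FW is a minimal EDS of H = G' - w
        push_neg at hwF'
        have hFWnw : ∀ f₀ ∈ FW, w ∉ f₀ := by
          intro f₀ hf₀ hwf₀
          obtain ⟨u, v, huv, rfl, hmem⟩ := hFWstruct f₀ hf₀
          rcases Sym2.mem_iff.mp hwf₀ with rfl | rfl
          · exact hwF' _ hmem (Sym2.mem_mk_left _ _)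
          · exact hwF' _ hmem (Sym2.mem_mk_right _ _)
        have hFWmin : IsMinEDS (AW.restr G' {v : W | v ≠ w}) FW := by
          constructor
          constructor
          · intro f₀ hf₀
            obtain ⟨u, v, huv, rfl, hmem⟩ := hFWstruct f₀ hf₀
            have hnw := hFWnw _ hf₀
            refine (SimpleGraph.mem_edgeSet _).mpr ⟨huv, ?_, ?_⟩
            · intro hh; exact hnw (hh ▸ Sym2.mem_mk_left u v)
            · intro hh; exact hnw (hh ▸ Sym2.mem_mk_right u v)
          · intro g hg
            obtain ⟨a, b, hab, rfl⟩ := AW.edge_repr hg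
            have hgG' : s(a, b) ∈ G'.edgeSet := (SimpleGraph.mem_edgeSet _).mpr hab.1
            obtain ⟨f, hfF, vv, hvv1, hvv2⟩ := hdomF _ hgG'
            obtain ⟨u', hu'⟩ := Sym2.mem_map.mp hvv1
            have hu'w : u' ≠ w := by
              rcases Sym2.mem_iff.mp hu'.1 with rfl | rfl
              · exact hab.2.1
              · exact hab.2.2
            by_cases hft0 : f = t0
            · subst hft0
              exact absurd (hinlt0 u' (hu'.2 ▸ hvv2)) hu'w
            · exact hdomdown _ hgG' ⟨f, hfF, hft0, u', hu'.2 ▸ hvv2, hu'.1⟩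
          · intro F'' hsub heds
            apply hF.2 _ (hWssub F'' hsub)
            apply hWdom F'' (fun e he => AW.restr_edge_le (heds.1 he))
            · intro g hg hwg
              obtain ⟨a, b, hab, rfl⟩ := AW.edge_repr hg
              have haw : a ≠ w := fun hh => hwg (hh ▸ Sym2.mem_mk_left a b)
              have hbw : b ≠ w := fun hh => hwg (hh ▸ Sym2.mem_mk_right a b)
              exact heds.2 s(a, b) ((SimpleGraph.mem_edgeSet _).mpr ⟨hab, haw, hbw⟩)
            · intro g hg hwg
              exact Or.inl hzt0
        have := hkH FW hFWmin
        omega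
    · -- Case A: t0 = xy
      have hnoinl : ∀ u' : W, (Sum.inl u' : W ⊕ Fin 2) ∉ t0 := by
        intro u' hu'
        rw [ht0xy] at hu'
        rcases Sym2.mem_iff.mp hu' with h | h <;> exact absurd h (by simp)
      have hFWmin : IsMinEDS G' FW := by
        constructor
        constructor
        · intro f₀ hf₀
          obtain ⟨u, v, huv, rfl, -⟩ := hFWstruct f₀ hf₀
          exact (SimpleGraph.mem_edgeSet _).mpr huv
        · intro g hg
          obtain ⟨f, hfF, vv, hvv1, hvv2⟩ := hdomF g hg
          obtain ⟨u', hu'⟩ := Sym2.mem_map.mp hvv1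
          have hft0 : f ≠ t0 := fun hh => hnoinl u' (hh ▸ hu'.2 ▸ hvv2)
          exact hdomdown g hg ⟨f, hfF, hft0, u', hu'.2 ▸ hvv2, hu'.1⟩
        · intro F'' hsub heds
          apply hF.2 _ (hWssub F'' hsub)
          apply hWdom F'' heds.1
          · intro g hg hwg
            exact heds.2 g hg
          · intro g hg hwg
            exact Or.inr (heds.2 g hg)
      have := hkG' FW hFWmin
      omega
  exact ⟨main, fun F₁ F₂ h1 h2 => by rw [main F₁ h1, main F₂ h2]⟩
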